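/- arXiv:2205.09941 — 2 statements merged into one kernel-verified Lean document; each statement's English description precedes it below -/
import Mathlib

section
/- A length space X is a metric tree if and only if for any two distinct points x,y∈X there is a unique rectifiable arc with endpoints x and y. -/
open Set Metric
open scoped ENNReal NNReal

/-- A curve from `x` to `y` parameterized on `[0,1]`. -/
def IsCurveOn {X : Type*} [PseudoEMetricSpace X] (γ : ℝ → X) (x y : X) : Prop :=
  ContinuousOn γ (Set.Icc 0 1) ∧ γ 0 = x ∧ γ 1 = y

/-- The set of lengths of curves from `x` to `y`. -/
def curveLengths {X : Type*} [PseudoEMetricSpace X] (x y : X) : Set ℝ≥0∞ :=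
  {ℓ | ∃ γ : ℝ → X, IsCurveOn γ x y ∧ eVariationOn γ (Set.Icc 0 1) = ℓ}

/-- `X` is a length space if the distance between any two points equals the infimum
of lengths of curves connecting them. -/
def IsLengthSpace (X : Type*) [PseudoEMetricSpace X] : Prop :=
  ∀ x y : X, edist x y = sInf (curveLengths x y)

/-- `X` is a geodesic space if any two points are joined by a curve whose length
equals the distance between them. -/
def IsGeodesicSpace (X : Type*) [PseudoEMetricSpace X] : Prop :=
  ∀ x y : X, ∃ γ : ℝ → X, IsCurveOn γ x y ∧ eVariationOn γ (Set.Icc 0 1) = edist x y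

/-- `A` is an arc with endpoints `x` and `y`: a homeomorphic image of `[0,1]`,
parameterized by an injective continuous curve from `x` to `y`. -/
def IsArc {X : Type*} [PseudoEMetricSpace X] (A : Set X) (x y : X) : Prop :=
  ∃ γ : ℝ → X, IsCurveOn γ x y ∧ Set.InjOn γ (Set.Icc 0 1) ∧ γ '' Set.Icc 0 1 = A

/-- `A` is a rectifiable arc with endpoints `x` and `y`. -/
def IsRectArc {X : Type*} [PseudoEMetricSpace X] (A : Set X) (x y : X) : Prop :=
  ∃ γ : ℝ → X, IsCurveOn γ x y ∧ Set.InjOn γ (Set.Icc 0 1) ∧ γ '' Set.Icc 0 1 = A ∧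
    eVariationOn γ (Set.Icc 0 1) ≠ ⊤

/-- A metric tree: a geodesic space in which any two distinct points are joined by a
unique arc. -/
def IsMetricTree (X : Type*) [PseudoEMetricSpace X] : Prop :=
  IsGeodesicSpace X ∧ ∀ x y : X, x ≠ y → ∃! A : Set X, IsArc A x y


section AuxLemmas

variable {X : Type*} [MetricSpace X]

/-- A continuous inverse of an injective parametrization. -/
lemma exists_param_inverse {γ : ℝ → X} (hc : ContinuousOn γ (Icc 0 1))
    (hi : InjOn γ (Icc 0 1)) :
    ∃ ψ : X → ℝ, ContinuousOn ψ (γ '' Icc 0 1) ∧ (∀ s ∈ Icc (0:ℝ) 1, ψ (γ s) = s) ∧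
      ∀ z ∈ γ '' Icc 0 1, ψ z ∈ Icc (0:ℝ) 1 ∧ γ (ψ z) = z := by
  classical
  have hbij : Function.Bijective (fun s : Icc (0:ℝ) 1 => (⟨γ s, mem_image_of_mem γ s.2⟩ :
      γ '' Icc 0 1)) := by
    constructor
    · intro a b hab
      exact Subtype.ext (hi a.2 b.2 (congrArg Subtype.val hab))
    · rintro ⟨z, s, hs, rfl⟩
      exact ⟨⟨s, hs⟩, rfl⟩
  let e : Icc (0:ℝ) 1 ≃ (γ '' Icc 0 1) := Equiv.ofBijective _ hbij
  have hec : Continuous e := by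
    apply Continuous.subtype_mk
    exact hc.restrict
  let h : Icc (0:ℝ) 1 ≃ₜ (γ '' Icc 0 1) := Continuous.homeoOfEquivCompactToT2 hec
  refine ⟨fun z => if hz : z ∈ γ '' Icc 0 1 then (h.symm ⟨z, hz⟩ : ℝ) else 0, ?_, ?_, ?_⟩
  · rw [continuousOn_iff_continuous_restrict]
    have : domRestrict (γ '' Icc 0 1) (fun z => if hz : z ∈ γ '' Icc 0 1
        then (h.symm ⟨z, hz⟩ : ℝ) else 0) = fun z => (h.symm z : ℝ) := by
      funext z
      exact dif_pos z.2
    rw [this]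
    exact continuous_subtype_val.comp h.symm.continuous
  · intro s hs
    have hz : γ s ∈ γ '' Icc 0 1 := mem_image_of_mem γ hs
    simp only [dif_pos hz]
    have : h ⟨s, hs⟩ = ⟨γ s, hz⟩ := rfl
    rw [← this, Homeomorph.symm_apply_apply]
  · intro z hz
    simp only [dif_pos hz]
    constructor
    · exact (h.symm ⟨z, hz⟩).2
    · have : h (h.symm ⟨z, hz⟩) = ⟨z, hz⟩ := h.apply_symm_apply _
      have := congrArg Subtype.val this
      exact this

/-- Reparametrization invariance of the length of an arc. -/
lemma var_eq_of_same_image {γ₁ γ₂ : ℝ → X} {x y : X}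
    (h1c : ContinuousOn γ₁ (Icc 0 1)) (h10 : γ₁ 0 = x) (h11 : γ₁ 1 = y)
    (h1i : InjOn γ₁ (Icc 0 1))
    (h2c : ContinuousOn γ₂ (Icc 0 1)) (h20 : γ₂ 0 = x) (h21 : γ₂ 1 = y)
    (h2i : InjOn γ₂ (Icc 0 1)) (him : γ₁ '' Icc 0 1 = γ₂ '' Icc 0 1) :
    eVariationOn γ₁ (Icc 0 1) = eVariationOn γ₂ (Icc 0 1) := by
  obtain ⟨ψ, hψc, hψl, hψr⟩ := exists_param_inverse h2c h2i
  set φ : ℝ → ℝ := fun s => ψ (γ₁ s) with hφ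
  have hmt : MapsTo γ₁ (Icc 0 1) (γ₂ '' Icc 0 1) := by
    intro s hs; rw [← him]; exact mem_image_of_mem _ hs
  have hφc : ContinuousOn φ (Icc 0 1) := hψc.comp h1c hmt
  have hφmem : ∀ s ∈ Icc (0:ℝ) 1, φ s ∈ Icc (0:ℝ) 1 ∧ γ₂ (φ s) = γ₁ s := by
    intro s hs; exact hψr _ (hmt hs)
  have hφi : InjOn φ (Icc 0 1) := by
    intro s hs t ht hst
    apply h1i hs ht
    rw [← (hφmem s hs).2, ← (hφmem t ht).2, hst]
  have h01 : (0:ℝ) ∈ Icc (0:ℝ) 1 := by constructor <;> norm_num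
  have h11' : (1:ℝ) ∈ Icc (0:ℝ) 1 := by constructor <;> norm_num
  have hφ0 : φ 0 = 0 := by
    have : γ₁ 0 = γ₂ 0 := by rw [h10, h20]
    rw [hφ]; simp only []
    rw [this, hψl 0 h01]
  have hφ1 : φ 1 = 1 := by
    have : γ₁ 1 = γ₂ 1 := by rw [h11, h21]
    rw [hφ]; simp only []
    rw [this, hψl 1 h11']
  have hmono : MonotoneOn φ (Icc 0 1) := by
    have := ContinuousOn.strictMonoOn_of_injOn_Icc (by norm_num : (0:ℝ) ≤ 1)
      (by rw [hφ0, hφ1]; norm_num) hφc hφi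
    exact this.monotoneOn
  have himg : φ '' Icc 0 1 = Icc 0 1 := by
    apply Subset.antisymm
    · rintro _ ⟨s, hs, rfl⟩; exact (hφmem s hs).1
    · have := intermediate_value_Icc (by norm_num : (0:ℝ) ≤ 1) hφc
      rw [hφ0, hφ1] at this
      exact this
  have : eVariationOn (γ₂ ∘ φ) (Icc 0 1) = eVariationOn γ₂ (φ '' Icc 0 1) :=
    eVariationOn.comp_eq_of_monotoneOn γ₂ φ hmono
  rw [himg] at this
  rw [← this]
  apply eVariationOn.eq_of_eqOn
  intro s hs
  exact ((hφmem s hs).2).symm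


/-- Restriction of an injective curve between two parameters. -/
lemma exists_subcurve {γ : ℝ → X} (hc : ContinuousOn γ (Icc 0 1)) (hi : InjOn γ (Icc 0 1))
    {u v : ℝ} (hu : u ∈ Icc (0:ℝ) 1) (hv : v ∈ Icc (0:ℝ) 1) (huv : u ≠ v) :
    ∃ δ : ℝ → X, IsCurveOn δ (γ u) (γ v) ∧ InjOn δ (Icc 0 1) ∧
      δ '' Icc 0 1 = γ '' uIcc u v ∧
      eVariationOn δ (Icc 0 1) ≤ eVariationOn γ (Icc 0 1) := by
  set φ : ℝ → ℝ := fun s => u + s * (v - u) with hφ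
  have hφsub : ∀ s ∈ Icc (0:ℝ) 1, φ s ∈ uIcc u v := by
    intro s hs
    simp only [hφ]
    rcases le_or_gt u v with h | h
    · rw [uIcc_of_le h]
      constructor
      · nlinarith [hs.1, hs.2]
      · nlinarith [hs.1, hs.2]
    · rw [uIcc_of_ge h.le]
      constructor
      · nlinarith [hs.1, hs.2]
      · nlinarith [hs.1, hs.2]
  have huIcc : uIcc u v ⊆ Icc (0:ℝ) 1 := by
    apply uIcc_subset_Icc hu hv
  have hφmapsto : MapsTo φ (Icc 0 1) (Icc 0 1) := fun s hs => huIcc (hφsub s hs)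
  have hφc : Continuous φ := by continuity
  have hφimg : φ '' Icc 0 1 = uIcc u v := by
    apply Subset.antisymm
    · rintro _ ⟨s, hs, rfl⟩; exact hφsub s hs
    · intro r hr
      refine ⟨(r - u) / (v - u), ?_, ?_⟩
      · rcases lt_or_gt_of_ne (Ne.symm huv) with h | h
        · rw [uIcc_of_ge h.le] at hr
          have hkey : (r - u) / (v - u) = (u - r) / (u - v) := by
            rw [← neg_sub u r, ← neg_sub u v, neg_div_neg_eq]
          rw [hkey]
          constructor
          · exact div_nonneg (by linarith [hr.2]) (by linarith)
          · rw [div_le_one (by linarith)]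
            linarith [hr.1]
        · rw [uIcc_of_le h.le] at hr
          constructor
          · exact div_nonneg (by linarith [hr.1]) (by linarith)
          · rw [div_le_one (by linarith)]
            linarith [hr.2]
      · have hvu : v - u ≠ 0 := sub_ne_zero_of_ne (Ne.symm huv)
        simp only [hφ]
        rw [div_mul_cancel₀ _ hvu]
        ring
  have hδc : ContinuousOn (γ ∘ φ) (Icc 0 1) := hc.comp hφc.continuousOn hφmapsto
  have hδi : InjOn (γ ∘ φ) (Icc 0 1) := by
    intro s hs t ht hst
    have := hi (hφmapsto hs) (hφmapsto ht) hst
    have hvu : v - u ≠ 0 := sub_ne_zero_of_ne (Ne.symm huv)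
    simp only [hφ] at this
    have := add_left_cancel this
    exact mul_right_cancel₀ hvu this
  refine ⟨γ ∘ φ, ⟨hδc, ?_, ?_⟩, hδi, ?_, ?_⟩
  · simp [hφ]
  · simp [hφ]
  · rw [image_comp, hφimg]
  · rcases lt_or_gt_of_ne huv with h | h
    · have hmono : MonotoneOn φ (Icc 0 1) := by
        intro s _ t _ hst
        simp only [hφ]
        nlinarith
      rw [eVariationOn.comp_eq_of_monotoneOn γ φ hmono, hφimg]
      exact eVariationOn.mono γ huIcc
    · have hanti : AntitoneOn φ (Icc 0 1) := by
        intro s _ t _ hst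
        simp only [hφ]
        nlinarith
      rw [eVariationOn.comp_eq_of_antitoneOn γ φ hanti, hφimg]
      exact eVariationOn.mono γ huIcc

/-- Concatenation of two curves. -/
lemma exists_concat {α β : ℝ → X} {p q r : X} (hα : IsCurveOn α p q) (hβ : IsCurveOn β q r) :
    ∃ δ : ℝ → X, IsCurveOn δ p r ∧
      eVariationOn δ (Icc 0 1) =
        eVariationOn α (Icc 0 1) + eVariationOn β (Icc 0 1) ∧
      δ '' Icc 0 1 ⊆ α '' Icc 0 1 ∪ β '' Icc 0 1 := by
  obtain ⟨hαc, hα0, hα1⟩ := hα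
  obtain ⟨hβc, hβ0, hβ1⟩ := hβ
  set δ : ℝ → X := fun s => if s ≤ 1/2 then α (2*s) else β (2*s - 1) with hδ
  have himg1 : (fun s : ℝ => 2*s) '' Icc 0 (1/2) = Icc 0 1 := by
    ext r
    constructor
    · rintro ⟨s, hs, rfl⟩
      exact ⟨by dsimp only; linarith [hs.1], by dsimp only; linarith [hs.2]⟩
    · intro hr; exact ⟨r/2, ⟨by linarith [hr.1], by linarith [hr.2]⟩, by ring⟩
  have himg2 : (fun s : ℝ => 2*s - 1) '' Icc (1/2) 1 = Icc 0 1 := by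
    ext r
    constructor
    · rintro ⟨s, hs, rfl⟩
      exact ⟨by dsimp only; linarith [hs.1], by dsimp only; linarith [hs.2]⟩
    · intro hr; exact ⟨(r+1)/2, ⟨by linarith [hr.1], by linarith [hr.2]⟩, by ring⟩
  have hmt1 : MapsTo (fun s : ℝ => 2*s) (Icc 0 (1/2)) (Icc 0 1) := by
    rw [← himg1]; exact mapsTo_image _ _
  have hmt2 : MapsTo (fun s : ℝ => 2*s - 1) (Icc (1/2) 1) (Icc 0 1) := by
    rw [← himg2]; exact mapsTo_image _ _
  have hEq1 : EqOn δ (α ∘ fun s : ℝ => 2*s) (Icc 0 (1/2)) := by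
    intro s hs
    simp only [hδ, Function.comp]
    rw [if_pos hs.2]
  have hEq2 : EqOn δ (β ∘ fun s : ℝ => 2*s - 1) (Icc (1/2) 1) := by
    intro s hs
    simp only [hδ, Function.comp]
    rcases eq_or_lt_of_le hs.1 with h | h
    · rw [if_pos h.symm.le, ← h]
      norm_num
      rw [hα1, hβ0]
    · rw [if_neg (by linarith)]
  have hc1 : ContinuousOn δ (Icc 0 (1/2)) :=
    (hαc.comp (by continuity : Continuous fun s : ℝ => 2*s).continuousOn hmt1).congr hEq1
  have hc2 : ContinuousOn δ (Icc (1/2) 1) :=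
    (hβc.comp (by continuity : Continuous fun s : ℝ => 2*s - 1).continuousOn hmt2).congr hEq2
  have hunion : Icc (0:ℝ) 1 = Icc 0 (1/2) ∪ Icc (1/2) 1 :=
    (Icc_union_Icc_eq_Icc (by norm_num) (by norm_num)).symm
  have hδcont : ContinuousOn δ (Icc 0 1) := by
    rw [hunion]
    intro s _
    have H1 : ContinuousWithinAt δ (Icc 0 (1/2)) s := by
      by_cases h : s ∈ Icc (0:ℝ) (1/2)
      · exact hc1 s h
      · exact continuousWithinAt_of_notMem_closure
          (by rwa [IsClosed.closure_eq isClosed_Icc])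
    have H2 : ContinuousWithinAt δ (Icc (1/2) 1) s := by
      by_cases h : s ∈ Icc (1/2:ℝ) 1
      · exact hc2 s h
      · exact continuousWithinAt_of_notMem_closure
          (by rwa [IsClosed.closure_eq isClosed_Icc])
    exact H1.union H2
  have hvar : eVariationOn δ (Icc 0 1) =
      eVariationOn α (Icc 0 1) + eVariationOn β (Icc 0 1) := by
    have hGreat : IsGreatest (Icc (0:ℝ) (1/2)) (1/2) := ⟨⟨by norm_num, le_refl _⟩,
      fun z hz => hz.2⟩
    have hLeast : IsLeast (Icc (1/2:ℝ) 1) (1/2) := ⟨⟨le_refl _, by norm_num⟩,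
      fun z hz => hz.1⟩
    conv_lhs => rw [hunion, eVariationOn.union δ hGreat hLeast]
    congr 1
    · rw [eVariationOn.eq_of_eqOn hEq1]
      have hmono : MonotoneOn (fun s : ℝ => 2*s) (Icc 0 (1/2)) := by
        intro a _ b _ hab; dsimp; linarith
      rw [eVariationOn.comp_eq_of_monotoneOn α _ hmono, himg1]
    · rw [eVariationOn.eq_of_eqOn hEq2]
      have hmono : MonotoneOn (fun s : ℝ => 2*s - 1) (Icc (1/2) 1) := by
        intro a _ b _ hab; dsimp; linarith
      rw [eVariationOn.comp_eq_of_monotoneOn β _ hmono, himg2]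
  refine ⟨δ, ⟨hδcont, ?_, ?_⟩, hvar, ?_⟩
  · simp only [hδ]
    rw [if_pos (by norm_num : (0:ℝ) ≤ 1/2)]
    rw [mul_zero, hα0]
  · simp only [hδ]
    rw [if_neg (by norm_num : ¬ (1:ℝ) ≤ 1/2)]
    norm_num [hβ1]
  · rintro _ ⟨s, hs, rfl⟩
    simp only [hδ]
    by_cases h : s ≤ 1/2
    · rw [if_pos h]
      exact Or.inl (mem_image_of_mem α (hmt1 ⟨hs.1, h⟩))
    · rw [if_neg h]
      exact Or.inr (mem_image_of_mem β (hmt2 ⟨le_of_not_ge h, hs.2⟩))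

/-- Chains of curves concatenate to a curve. -/
lemma exists_chain {S : Set X} (f : ℕ → X) (n : ℕ) (h0 : f 0 ∈ S)
    (h : ∀ i < n, ∃ c : ℝ → X, IsCurveOn c (f i) (f (i+1)) ∧
      eVariationOn c (Icc 0 1) ≠ ⊤ ∧ c '' Icc 0 1 ⊆ S) :
    ∃ c : ℝ → X, IsCurveOn c (f 0) (f n) ∧
      eVariationOn c (Icc 0 1) ≠ ⊤ ∧ c '' Icc 0 1 ⊆ S := by
  induction n with
  | zero =>
    refine ⟨fun _ => f 0, ⟨continuousOn_const, rfl, rfl⟩, ?_, ?_⟩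
    · rw [eVariationOn.constant_on]
      · exact ENNReal.zero_ne_top
      · intro a ha b hb
        obtain ⟨_, _, rfl⟩ := ha
        obtain ⟨_, _, rfl⟩ := hb
        rfl
    · rintro _ ⟨s, _, rfl⟩; exact h0
  | succ n ih =>
    obtain ⟨c, hc, hcfin, hcS⟩ := ih (fun i hi => h i (Nat.lt_succ_of_lt hi))
    obtain ⟨d, hd, hdfin, hdS⟩ := h n (Nat.lt_succ_self n)
    obtain ⟨e, he, hevar, heS⟩ := exists_concat hc hd
    refine ⟨e, he, ?_, ?_⟩
    · rw [hevar]; exact ENNReal.add_ne_top.2 ⟨hcfin, hdfin⟩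
    · exact heS.trans (union_subset hcS hdS)


/-- Near a point of `K`, the variation of `σ` over `K` to the right is small. -/
lemma variation_right_small {σ : ℝ → X} {K : Set ℝ}
    (hσ : ContinuousOn σ (Icc 0 1)) (hK : K ⊆ Icc 0 1)
    (hfin : eVariationOn σ K ≠ ⊤) {t : ℝ} (ht : t ∈ K)
    {η : ℝ≥0∞} (hη : 0 < η) (hηtop : η ≠ ⊤) :
    ∃ δ > (0:ℝ), ∀ s ∈ K, t < s → s < t + δ →
      eVariationOn σ (K ∩ Icc t s) ≤ η := by
  classical
  set W := eVariationOn σ (K ∩ Icc t 1) with hW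
  have hWfin : W ≠ ⊤ := by
    refine ne_top_of_le_ne_top hfin ?_
    exact eVariationOn.mono σ inter_subset_left
  by_cases hWη : W ≤ η
  · refine ⟨1, one_pos, fun s hs hts _ => ?_⟩
    refine le_trans (eVariationOn.mono σ ?_) hWη
    intro z hz
    exact ⟨hz.1, hz.2.1, le_trans hz.2.2 (hK hs).2⟩
  push_neg at hWη
  have hW0 : W ≠ 0 := by
    intro h; rw [h] at hWη; exact (not_lt_of_ge zero_le) hWη
  set η2 := η / 2 with hη2
  have hη2pos : η2 ≠ 0 := by
    simp only [hη2, ne_eq, ENNReal.div_eq_zero_iff]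
    push_neg
    exact ⟨hη.ne', by norm_num⟩
  have hη2top : η2 ≠ ⊤ := by
    simp only [hη2]
    exact ne_top_of_le_ne_top hηtop ENNReal.half_le_self
  have hη2le : η2 ≤ W := le_trans ENNReal.half_le_self hWη.le
  have hlt : W - η2 < W := ENNReal.sub_lt_self hWfin hW0 hη2pos
  have hlt2 : W - η2 < ⨆ p : ℕ × { u : ℕ → ℝ // Monotone u ∧ ∀ i, u i ∈ K ∩ Icc t 1 },
      ∑ i ∈ Finset.range p.1, edist (σ (p.2.1 (i + 1))) (σ (p.2.1 i)) := hlt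
  obtain ⟨⟨n, ⟨u, hu, hus⟩⟩, hS⟩ := lt_iSup_iff.mp hlt2
  simp only at hS
  set S := ∑ i ∈ Finset.range n, edist (σ (u (i + 1))) (σ (u i)) with hSdef
  have hWS : W ≤ S + η2 := by
    calc W = (W - η2) + η2 := (tsub_add_cancel_of_le hη2le).symm
    _ ≤ S + η2 := add_le_add_left hS.le η2
  rcases le_or_gt 1 t with ht1 | ht1
  · refine ⟨1, one_pos, fun s hs hts _ => absurd hts (not_lt_of_ge ?_)⟩
    exact le_trans (hK hs).2 ht1
  -- find a positive gap above t among the finitely many partition points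
  have hm : ∃ m : ℝ, t < m ∧ ∀ i ≤ n, u i ≤ t ∨ m ≤ u i := by
    set F : Finset ℝ := ((Finset.range (n + 1)).image u).filter (fun z => t < z) with hF
    by_cases hFne : F.Nonempty
    · refine ⟨F.min' hFne, (Finset.mem_filter.mp (F.min'_mem hFne)).2, fun i hi => ?_⟩
      rcases le_or_gt (u i) t with h | h
      · exact Or.inl h
      · refine Or.inr (Finset.min'_le F (u i) ?_)
        refine Finset.mem_filter.mpr ⟨Finset.mem_image_of_mem u ?_, h⟩
        exact Finset.mem_range.mpr (Nat.lt_succ_of_le hi)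
    · refine ⟨t + 1, by linarith, fun i hi => Or.inl ?_⟩
      by_contra h
      push_neg at h
      exact hFne ⟨u i, Finset.mem_filter.mpr ⟨Finset.mem_image_of_mem u
        (Finset.mem_range.mpr (Nat.lt_succ_of_le hi)), h⟩⟩
  obtain ⟨m, htm, hm⟩ := hm
  set ε₀ := η2 / ((n : ℝ≥0∞) + 1) with hε₀
  have hε₀pos : 0 < ε₀ := ENNReal.div_pos hη2pos (by simp)
  -- continuity at t
  have hσt : ContinuousWithinAt σ (Icc 0 1) t := hσ t (hK ht)
  have hev : ∀ᶠ s in nhdsWithin t (Icc 0 1), edist (σ s) (σ t) < ε₀ :=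
    EMetric.tendsto_nhds.mp hσt ε₀ hε₀pos
  rw [Filter.Eventually, Metric.mem_nhdsWithin_iff] at hev
  obtain ⟨δ', hδ'pos, hδ'⟩ := hev
  refine ⟨min δ' (m - t), lt_min hδ'pos (by linarith), fun s hsK hts hstδ => ?_⟩
  have hs01 := hK hsK
  have hmin1 : min δ' (m - t) ≤ m - t := min_le_right _ _
  have hmin2 : min δ' (m - t) ≤ δ' := min_le_left _ _
  have hsm : s < m := by linarith
  have hB : edist (σ s) (σ t) < ε₀ := by
    apply hδ'
    constructor
    · rw [mem_ball, Real.dist_eq, abs_of_pos (by linarith : (0:ℝ) < s - t)]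
      linarith
    · exact hs01
  set B := edist (σ s) (σ t) with hBdef
  set u' : ℕ → ℝ := fun i => max s (u i) with hu'def
  have hu' : Monotone u' := fun a b hab => max_le_max le_rfl (hu hab)
  have hus' : ∀ i, u' i ∈ K ∩ Icc s 1 := by
    intro i
    rcases le_or_gt s (u i) with h | h
    · have : u' i = u i := max_eq_right h
      rw [this]
      exact ⟨(hus i).1, h, (hus i).2.2⟩
    · have : u' i = s := max_eq_left h.le
      rw [this]
      exact ⟨hsK, le_refl _, hs01.2⟩
  have termwise : ∀ i ∈ Finset.range n,
      edist (σ (u (i + 1))) (σ (u i)) ≤ edist (σ (u' (i + 1))) (σ (u' i)) + B := by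
    intro i hi
    rw [Finset.mem_range] at hi
    rcases le_or_gt s (u i) with h | h
    · have h2 : s ≤ u (i + 1) := le_trans h (hu (Nat.le_succ i))
      have e1 : u' i = u i := max_eq_right h
      have e2 : u' (i + 1) = u (i + 1) := max_eq_right h2
      rw [e1, e2]
      exact le_self_add
    · have hit : u i = t := by
        rcases hm i (le_of_lt hi) with h' | h'
        · exact le_antisymm h' (hus i).2.1
        · exfalso; linarith
      have hu'i : u' i = s := max_eq_left h.le
      rcases le_or_gt s (u (i + 1)) with h2 | h2
      · have e2 : u' (i + 1) = u (i + 1) := max_eq_right h2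
        rw [hu'i, e2, hit]
        calc edist (σ (u (i + 1))) (σ t) ≤
            edist (σ (u (i + 1))) (σ s) + edist (σ s) (σ t) := edist_triangle _ _ _
        _ = edist (σ (u (i + 1))) (σ s) + B := rfl
      · have hit2 : u (i + 1) = t := by
          rcases hm (i + 1) hi with h' | h'
          · exact le_antisymm h' (hus (i + 1)).2.1
          · exfalso; linarith
        rw [hit, hit2, edist_self]
        exact zero_le
  have hsum : S ≤ (∑ i ∈ Finset.range n, edist (σ (u' (i + 1))) (σ (u' i))) + n • B := by
    calc S ≤ ∑ i ∈ Finset.range n, (edist (σ (u' (i + 1))) (σ (u' i)) + B) :=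
      Finset.sum_le_sum termwise
    _ = _ := by rw [Finset.sum_add_distrib, Finset.sum_const, Finset.card_range]
  have hS' : (∑ i ∈ Finset.range n, edist (σ (u' (i + 1))) (σ (u' i))) ≤
      eVariationOn σ (K ∩ Icc s 1) := eVariationOn.sum_le (f := σ) (n := n) hu' hus'
  have hnB : (n : ℕ) • B ≤ η2 := by
    rw [nsmul_eq_mul]
    calc (n : ℝ≥0∞) * B ≤ ((n : ℝ≥0∞) + 1) * ε₀ := by
          apply mul_le_mul' (by simp) hB.le
    _ = η2 := by
      rw [hε₀]
      exact ENNReal.mul_div_cancel' (by simp) (by simp)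
  have hsplit : eVariationOn σ (K ∩ Icc t s) + eVariationOn σ (K ∩ Icc s 1) = W := by
    rw [hW]
    exact eVariationOn.Icc_add_Icc σ (le_of_lt hts) hs01.2 hsK
  have hfin2 : eVariationOn σ (K ∩ Icc s 1) ≠ ⊤ :=
    ne_top_of_le_ne_top hfin (eVariationOn.mono σ inter_subset_left)
  have hchain : eVariationOn σ (K ∩ Icc t s) + eVariationOn σ (K ∩ Icc s 1) ≤
      eVariationOn σ (K ∩ Icc s 1) + η := by
    calc eVariationOn σ (K ∩ Icc t s) + eVariationOn σ (K ∩ Icc s 1) = W := hsplit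
    _ ≤ S + η2 := hWS
    _ ≤ ((∑ i ∈ Finset.range n, edist (σ (u' (i + 1))) (σ (u' i))) + n • B) + η2 :=
      add_le_add_left hsum η2
    _ ≤ (eVariationOn σ (K ∩ Icc s 1) + η2) + η2 :=
      add_le_add_left (add_le_add hS' hnB) η2
    _ = eVariationOn σ (K ∩ Icc s 1) + η := by
      rw [add_assoc, hη2, ENNReal.add_halves]
  rw [add_comm (eVariationOn σ (K ∩ Icc t s))] at hchain
  exact (ENNReal.add_le_add_iff_left hfin2).mp hchain


lemma variation_reflect (σ : ℝ → X) (S : Set ℝ) :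
    eVariationOn (σ ∘ (fun r : ℝ => 1 - r)) ((fun r : ℝ => 1 - r) '' S) = eVariationOn σ S := by
  have hanti : AntitoneOn (fun r : ℝ => 1 - r) ((fun r : ℝ => 1 - r) '' S) := by
    intro a _ b _ hab; dsimp; linarith
  rw [eVariationOn.comp_eq_of_antitoneOn σ _ hanti]
  congr 1
  rw [image_image]
  simp

lemma variation_left_small {σ : ℝ → X} {K : Set ℝ}
    (hσ : ContinuousOn σ (Icc 0 1)) (hK : K ⊆ Icc 0 1)
    (hfin : eVariationOn σ K ≠ ⊤) {t : ℝ} (ht : t ∈ K)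
    {η : ℝ≥0∞} (hη : 0 < η) (hηtop : η ≠ ⊤) :
    ∃ δ > (0:ℝ), ∀ s ∈ K, s < t → t - δ < s →
      eVariationOn σ (K ∩ Icc s t) ≤ η := by
  set ρ : ℝ → ℝ := fun r => 1 - r with hρ
  set σ' := σ ∘ ρ with hσ'
  set K' := ρ '' K with hK'
  have hρIcc : ρ '' Icc 0 1 = Icc 0 1 := by
    ext z
    simp only [hρ, mem_image, mem_Icc]
    constructor
    · rintro ⟨r, hr, rfl⟩; constructor <;> linarith [hr.1, hr.2]
    · intro hz; exact ⟨1 - z, ⟨by linarith [hz.2], by linarith [hz.1]⟩, by ring⟩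
  have hσ'c : ContinuousOn σ' (Icc 0 1) := by
    apply hσ.comp (by continuity : Continuous ρ).continuousOn
    intro z hz
    rw [← hρIcc]
    exact mem_image_of_mem ρ hz
  have hK'sub : K' ⊆ Icc 0 1 := by
    rw [hK', ← hρIcc]
    exact fun _ ⟨k, hk, e⟩ => ⟨k, hK hk, e⟩
  have hfin' : eVariationOn σ' K' ≠ ⊤ := by
    rw [hσ', hK', variation_reflect σ K]
    exact hfin
  have ht' : ρ t ∈ K' := mem_image_of_mem ρ ht
  obtain ⟨δ, hδpos, hδ⟩ := variation_right_small hσ'c hK'sub hfin' ht' hη hηtop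
  refine ⟨δ, hδpos, fun s hs hst hsδ => ?_⟩
  have hmem : ρ s ∈ K' := mem_image_of_mem ρ hs
  have h1 : ρ t < ρ s := by simp only [hρ]; linarith
  have h2 : ρ s < ρ t + δ := by simp only [hρ]; linarith
  have := hδ (ρ s) hmem h1 h2
  have hset : K' ∩ Icc (ρ t) (ρ s) = ρ '' (K ∩ Icc s t) := by
    ext z
    simp only [hK', hρ, mem_inter_iff, mem_image, mem_Icc]
    constructor
    · rintro ⟨⟨k, hk, rfl⟩, hz1, hz2⟩
      exact ⟨k, ⟨hk, by linarith, by linarith⟩, rfl⟩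
    · rintro ⟨k, ⟨hk, hk1, hk2⟩, rfl⟩
      exact ⟨⟨k, hk, rfl⟩, by constructor <;> linarith⟩
  rw [hset] at this
  rwa [hσ', variation_reflect σ (K ∩ Icc s t)] at this


/-- Zorn: there is a minimal closed subset of `[0,1]` containing `0,1` whose "gaps" join
points with equal values. -/
lemma exists_minimal_gapset {σ : ℝ → X} (hσ : ContinuousOn σ (Icc 0 1)) :
    ∃ K : Set ℝ, IsClosed K ∧ K ⊆ Icc 0 1 ∧ 0 ∈ K ∧ 1 ∈ K ∧
      (∀ a ∈ K, ∀ b ∈ K, a < b → Ioo a b ∩ K = ∅ → σ a = σ b) ∧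
      (∀ s ∈ K, ∀ t ∈ K, s < t → σ s = σ t → Ioo s t ∩ K = ∅) := by
  classical
  set F : Set (Set ℝ) := {K | IsClosed K ∧ K ⊆ Icc 0 1 ∧ 0 ∈ K ∧ 1 ∈ K ∧
    ∀ a ∈ K, ∀ b ∈ K, a < b → Ioo a b ∩ K = ∅ → σ a = σ b} with hF
  have hIccF : Icc (0:ℝ) 1 ∈ F := by
    refine ⟨isClosed_Icc, Subset.rfl, ⟨le_refl _, by norm_num⟩, ⟨by norm_num, le_refl _⟩, ?_⟩
    intro a ha b hb hab hgap
    exfalso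
    have hmem : (a + b)/2 ∈ Ioo a b ∩ Icc 0 1 := by
      constructor
      · constructor <;> [linarith; linarith]
      · constructor
        · linarith [ha.1, hb.1]
        · linarith [ha.2, hb.2]
    rw [hgap] at hmem
    exact hmem
  have hchain : ∀ c ⊆ F, IsChain (· ⊆ ·) c → c.Nonempty →
      ∃ lb ∈ F, ∀ K ∈ c, lb ⊆ K := by
    intro c hcF hc hcne
    obtain ⟨K₀, hK₀⟩ := hcne
    refine ⟨⋂₀ c, ⟨?_, ?_, ?_, ?_, ?_⟩, fun K hK => sInter_subset_of_mem hK⟩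
    · exact isClosed_sInter fun K hK => (hcF hK).1
    · exact (sInter_subset_of_mem hK₀).trans (hcF hK₀).2.1
    · exact fun K hK => (hcF hK).2.2.1
    · exact fun K hK => (hcF hK).2.2.2.1
    · -- the gap property passes to chain intersections
      intro a ha b hb hab hgap
      have ha01 : a ∈ Icc (0:ℝ) 1 := (hcF hK₀).2.1 (ha K₀ hK₀)
      have hb01 : b ∈ Icc (0:ℝ) 1 := (hcF hK₀).2.1 (hb K₀ hK₀)
      apply eq_of_forall_dist_le
      intro η hη
      obtain ⟨εa, hεa, hεa'⟩ := Metric.continuousWithinAt_iff.mp (hσ a ha01) (η/2) (by linarith)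
      obtain ⟨εb, hεb, hεb'⟩ := Metric.continuousWithinAt_iff.mp (hσ b hb01) (η/2) (by linarith)
      set ε := min (min (εa/2) (εb/2)) ((b - a)/3) with hε
      have hεpos : 0 < ε := by
        apply lt_min (lt_min (by linarith) (by linarith)) (by linarith)
      have hεa2 : ε < εa := lt_of_le_of_lt ((min_le_left _ _).trans (min_le_left _ _))
        (by linarith)
      have hεb2 : ε < εb := lt_of_le_of_lt ((min_le_left _ _).trans (min_le_right _ _))
        (by linarith)
      have hε3 : ε ≤ (b - a)/3 := min_le_right _ _
      -- find a chain member missing the middle interval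
      have hmiss : ∃ L ∈ c, L ∩ Icc (a + ε) (b - ε) = ∅ := by
        by_contra hcon
        push_neg at hcon
        have hne : ∀ L : c, ((L : Set ℝ) ∩ Icc (a + ε) (b - ε)).Nonempty := by
          intro L
          rcases hcon L L.2 with h
          exact h
        have hdir : Directed (· ⊇ ·) (fun L : c => (L : Set ℝ) ∩ Icc (a + ε) (b - ε)) := by
          intro L₁ L₂
          rcases hc.total L₁.2 L₂.2 with h | h
          · exact ⟨L₁, Subset.rfl, inter_subset_inter_left _ h⟩
          · exact ⟨L₂, inter_subset_inter_left _ h, Subset.rfl⟩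
        have hcompact : ∀ L : c, IsCompact ((L : Set ℝ) ∩ Icc (a + ε) (b - ε)) := by
          intro L
          exact isCompact_Icc.inter_left (hcF L.2).1
        have hclosed : ∀ L : c, IsClosed ((L : Set ℝ) ∩ Icc (a + ε) (b - ε)) := by
          intro L
          exact ((hcF L.2).1).inter isClosed_Icc
        haveI : Nonempty c := ⟨⟨K₀, hK₀⟩⟩
        obtain ⟨z, hz⟩ := IsCompact.nonempty_iInter_of_directed_nonempty_isCompact_isClosed
          _ hdir hne hcompact hclosed
        simp only [mem_iInter, mem_inter_iff] at hz
        have hzK : z ∈ ⋂₀ c := fun L hL => (hz ⟨L, hL⟩).1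
        have hzJ : z ∈ Icc (a + ε) (b - ε) := (hz ⟨K₀, hK₀⟩).2
        have : z ∈ Ioo a b ∩ ⋂₀ c := ⟨⟨by linarith [hzJ.1], by linarith [hzJ.2]⟩, hzK⟩
        rw [hgap] at this
        exact this
      obtain ⟨L, hLc, hLJ⟩ := hmiss
      have hLF := hcF hLc
      have haL : a ∈ L := ha L hLc
      have hbL : b ∈ L := hb L hLc
      set a' := sSup (L ∩ Icc a (a + ε)) with ha'
      set b' := sInf (L ∩ Icc (b - ε) b) with hb'
      have ha'mem : a' ∈ L ∩ Icc a (a + ε) := by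
        apply IsClosed.csSup_mem (hLF.1.inter isClosed_Icc)
          ⟨a, haL, le_refl _, by linarith⟩
        exact (bddAbove_Icc (a := a) (b := a + ε)).mono inter_subset_right
      have hb'mem : b' ∈ L ∩ Icc (b - ε) b := by
        apply IsClosed.csInf_mem (hLF.1.inter isClosed_Icc)
          ⟨b, hbL, by linarith, le_refl _⟩
        exact (bddBelow_Icc : BddBelow (Icc (b - ε) b)).mono inter_subset_right
      have ha'b' : a' < b' := by
        have h1 : a' ≤ a + ε := ha'mem.2.2
        have h2 : b - ε ≤ b' := hb'mem.2.1
        linarith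
      have hgap' : Ioo a' b' ∩ L = ∅ := by
        ext z
        simp only [mem_inter_iff, mem_Ioo, mem_empty_iff_false, iff_false, not_and]
        rintro ⟨hz1, hz2⟩ hzL
        rcases le_or_gt z (a + ε) with h | h
        · have hza : a ≤ z := le_trans ha'mem.2.1 hz1.le
          have : z ≤ a' := le_csSup ((bddAbove_Icc (a := a) (b := a + ε)).mono
            inter_subset_right) ⟨hzL, hza, h⟩
          linarith
        · rcases le_or_gt (b - ε) z with h2 | h2
          · have hzb : z ≤ b := le_trans hz2.le hb'mem.2.2
            have : b' ≤ z := csInf_le ((bddBelow_Icc : BddBelow (Icc (b - ε) b)).mono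
              inter_subset_right) ⟨hzL, h2, hzb⟩
            linarith
          · have : z ∈ L ∩ Icc (a + ε) (b - ε) := ⟨hzL, h.le, h2.le⟩
            rw [hLJ] at this
            exact this
      have heq : σ a' = σ b' := hLF.2.2.2.2 a' ha'mem.1 b' hb'mem.1 ha'b' hgap'
      have ha'01 : a' ∈ Icc (0:ℝ) 1 := hLF.2.1 ha'mem.1
      have hb'01 : b' ∈ Icc (0:ℝ) 1 := hLF.2.1 hb'mem.1
      have hda : dist (σ a') (σ a) < η/2 := by
        apply hεa' ha'01
        rw [Real.dist_eq, abs_of_nonneg (by linarith [ha'mem.2.1] : (0:ℝ) ≤ a' - a)]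
        linarith [ha'mem.2.2]
      have hdb : dist (σ b') (σ b) < η/2 := by
        apply hεb' hb'01
        rw [Real.dist_eq, abs_of_nonpos (by linarith [hb'mem.2.2] : b' - b ≤ 0)]
        linarith [hb'mem.2.1]
      calc dist (σ a) (σ b) ≤ dist (σ a) (σ a') + dist (σ a') (σ b) := dist_triangle _ _ _
      _ = dist (σ a) (σ a') + dist (σ b') (σ b) := by rw [heq]
      _ ≤ η/2 + η/2 := by
          rw [dist_comm (σ a)]
          exact add_le_add hda.le hdb.le
      _ = η := by ring
  obtain ⟨K, hKsub, hKmin⟩ := zorn_superset_nonempty F hchain (Icc 0 1) hIccF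
  obtain ⟨hKc, hK01, h0K, h1K, hKgap⟩ := hKmin.prop
  refine ⟨K, hKc, hK01, h0K, h1K, hKgap, ?_⟩
  -- minimality gives: equal values at s < t in K force a gap
  intro s hs t ht hst heq
  set K' := K \ Ioo s t with hK'
  have hK'F : K' ∈ F := by
    refine ⟨hKc.sdiff isOpen_Ioo, diff_subset.trans hK01, ?_, ?_, ?_⟩
    · exact ⟨h0K, fun h => absurd h.1 (not_lt_of_ge (hK01 hs).1)⟩
    · exact ⟨h1K, fun h => absurd h.2 (not_lt_of_ge (hK01 ht).2)⟩
    · intro a ha b hb hab hgap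
      by_cases hcase : b ≤ s ∨ t ≤ a
      · -- the interval (a,b) does not meet (s,t)
        apply hKgap a ha.1 b hb.1 hab
        ext z
        simp only [mem_inter_iff, mem_Ioo, mem_empty_iff_false, iff_false, not_and]
        rintro ⟨hz1, hz2⟩ hzK
        have hznot : z ∉ Ioo s t := by
          rintro ⟨hsz, hzt⟩
          rcases hcase with h | h
          · linarith
          · linarith
        have : z ∈ Ioo a b ∩ K' := ⟨⟨hz1, hz2⟩, hzK, hznot⟩
        rw [hgap] at this
        exact this
      · push_neg at hcase
        obtain ⟨hsb, hat⟩ := hcase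
        have has : a ≤ s := le_of_not_gt (fun h' => ha.2 ⟨h', hat⟩)
        have htb : t ≤ b := le_of_not_gt (fun h' => hb.2 ⟨hsb, h'⟩)
        have hsa : σ a = σ s := by
          rcases eq_or_lt_of_le has with h | h
          · rw [h]
          · apply hKgap a ha.1 s hs h
            rw [eq_empty_iff_forall_notMem]
            rintro z ⟨⟨hz1, hz2⟩, hzK⟩
            have hznot : z ∉ Ioo s t := fun hc => absurd hz2 (not_lt_of_ge hc.1.le)
            have : z ∈ Ioo a b ∩ K' := ⟨⟨hz1, by linarith⟩, hzK, hznot⟩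
            rw [hgap] at this
            exact this
        have htbeq : σ t = σ b := by
          rcases eq_or_lt_of_le htb with h | h
          · rw [h]
          · apply hKgap t ht b hb.1 h
            rw [eq_empty_iff_forall_notMem]
            rintro z ⟨⟨hz1, hz2⟩, hzK⟩
            have hznot : z ∉ Ioo s t := fun hc => absurd hz1 (not_lt_of_ge hc.2.le)
            have : z ∈ Ioo a b ∩ K' := ⟨⟨by linarith, hz2⟩, hzK, hznot⟩
            rw [hgap] at this
            exact this
        rw [hsa, heq, htbeq]
  have hKK' : K ⊆ K' := hKmin.2 hK'F diff_subset
  rw [eq_empty_iff_forall_notMem]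
  rintro z ⟨hz, hzK⟩
  exact (hKK' hzK).2 hz


/-- Extraction of a rectifiable injective curve from a rectifiable curve. -/
theorem extract_arc {σ : ℝ → X} {x y : X} (hσ : IsCurveOn σ x y) (hxy : x ≠ y)
    (hfin : eVariationOn σ (Icc 0 1) ≠ ⊤) :
    ∃ g : ℝ → X, IsCurveOn g x y ∧ InjOn g (Icc 0 1) ∧
      g '' Icc 0 1 ⊆ σ '' Icc 0 1 ∧
      eVariationOn g (Icc 0 1) ≤ eVariationOn σ (Icc 0 1) := by
  classical
  obtain ⟨hσc, hσ0, hσ1⟩ := hσ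
  obtain ⟨K, hKc, hK01, h0K, h1K, hKgap, hKmin⟩ := exists_minimal_gapset hσc
  set Λ := eVariationOn σ K with hΛ
  have hΛle : Λ ≤ eVariationOn σ (Icc 0 1) := eVariationOn.mono σ hK01
  have hΛfin : Λ ≠ ⊤ := ne_top_of_le_ne_top hfin hΛle
  have hΛ0 : Λ ≠ 0 := by
    intro h
    apply hxy
    rw [← hσ0, ← hσ1]
    apply eq_of_edist_eq_zero
    have := eVariationOn.edist_le σ h0K h1K
    rw [← hΛ, h] at this
    exact le_antisymm this (zero_le)
  set v : ℝ → ℝ≥0∞ := fun r => eVariationOn σ (K ∩ Icc 0 r) with hv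
  have hvmono : ∀ {r r' : ℝ}, r ≤ r' → v r ≤ v r' := by
    intro r r' h
    exact eVariationOn.mono σ (inter_subset_inter_right K (Icc_subset_Icc le_rfl h))
  have hvle : ∀ r, v r ≤ Λ := fun r => eVariationOn.mono σ inter_subset_left
  have hvfin : ∀ r, v r ≠ ⊤ := fun r => ne_top_of_le_ne_top hΛfin (hvle r)
  have hv0 : v 0 = 0 := by
    apply eVariationOn.subsingleton
    intro a ha b hb
    have h1 : a = 0 := le_antisymm ha.2.2 ha.2.1
    have h2 : b = 0 := le_antisymm hb.2.2 hb.2.1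
    rw [h1, h2]
  have hv1 : v 1 = Λ := by
    show eVariationOn σ (K ∩ Icc 0 1) = eVariationOn σ K
    rw [inter_eq_left.mpr hK01]
  have hsplit : ∀ {a b : ℝ}, a ∈ K → b ∈ K → a ≤ b →
      v b = v a + eVariationOn σ (K ∩ Icc a b) := by
    intro a b ha hb hab
    rw [hv]
    exact (eVariationOn.Icc_add_Icc σ (hK01 ha).1 hab ha).symm
  have hzero : ∀ {a b : ℝ}, a ∈ K → b ∈ K → a ≤ b →
      (σ a = σ b ↔ eVariationOn σ (K ∩ Icc a b) = 0) := by
    intro a b ha hb hab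
    constructor
    · intro heq
      rcases eq_or_lt_of_le hab with h | h
      · apply eVariationOn.subsingleton
        intro z hz w hw
        have hz' : z = a := le_antisymm (h ▸ hz.2.2) hz.2.1
        have hw' : w = a := le_antisymm (h ▸ hw.2.2) hw.2.1
        rw [hz', hw']
      · have hgap := hKmin a ha b hb h heq
        apply eVariationOn.constant_on
        rintro _ ⟨z, hz, rfl⟩ _ ⟨w, hw, rfl⟩
        have hZ : ∀ u : ℝ, u ∈ K ∩ Icc a b → σ u = σ a := by
          intro u hu
          rcases eq_or_lt_of_le hu.2.1 with h1 | h1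
          · rw [← h1]
          · rcases eq_or_lt_of_le hu.2.2 with h2 | h2
            · rw [h2, heq]
            · exfalso
              have : u ∈ Ioo a b ∩ K := ⟨⟨h1, h2⟩, hu.1⟩
              rw [hgap] at this
              exact this
        rw [hZ z hz, hZ w hw]
    · intro h0
      apply eq_of_edist_eq_zero
      have := eVariationOn.edist_le σ (show a ∈ K ∩ Icc a b from ⟨ha, le_refl a, hab⟩)
        (show b ∈ K ∩ Icc a b from ⟨hb, hab, le_refl b⟩)
      rw [h0] at this
      exact le_antisymm this (zero_le)
  -- surjectivity of v restricted to K onto [0, Λ]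
  have hsurj : ∀ w : ℝ≥0∞, w ≤ Λ → ∃ r ∈ K, v r = w := by
    intro w hw
    by_cases hA : ∃ r ∈ K, v r = w
    · exact hA
    push_neg at hA
    exfalso
    set P : Set ℝ := {r | r ∈ K ∧ v r < w} with hP
    set Q : Set ℝ := {r | r ∈ K ∧ w < v r} with hQ
    have hw0 : w ≠ 0 := by
      intro h
      exact hA 0 h0K (by rw [hv0, h])
    have h0P : 0 ∈ P := ⟨h0K, by rw [hv0]; exact lt_of_le_of_ne zero_le (Ne.symm hw0)⟩
    have h1Q : 1 ∈ Q := ⟨h1K, by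
      rw [hv1]
      exact lt_of_le_of_ne hw (fun h => hA 1 h1K (by rw [hv1, h]))⟩
    have hPQ : ∀ p ∈ P, ∀ q ∈ Q, p < q := by
      intro p hp q hq
      by_contra h
      push_neg at h
      exact absurd (lt_trans hp.2 hq.2) (not_lt_of_ge (hvmono h))
    have hPsub : P ⊆ K := fun p hp => hp.1
    have hQsub : Q ⊆ K := fun q hq => hq.1
    have hbddP : BddAbove P := BddAbove.mono (hPsub.trans hK01) bddAbove_Icc
    have hbddQ : BddBelow Q := BddBelow.mono (hQsub.trans hK01) bddBelow_Icc
    set t₀ := sSup P with ht₀def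
    set t₁ := sInf Q with ht₁def
    have ht₀K : t₀ ∈ K := by
      have h1 := csSup_mem_closure ⟨0, h0P⟩ hbddP
      have h2 : closure P ⊆ closure K := closure_mono hPsub
      rw [hKc.closure_eq] at h2
      exact h2 h1
    have ht₁K : t₁ ∈ K := by
      have h1 := csInf_mem_closure ⟨1, h1Q⟩ hbddQ
      have h2 : closure Q ⊆ closure K := closure_mono hQsub
      rw [hKc.closure_eq] at h2
      exact h2 h1
    have ht₀₁ : t₀ ≤ t₁ :=
      csSup_le ⟨0, h0P⟩ (fun p hp => le_csInf ⟨1, h1Q⟩ fun q hq => (hPQ p hp q hq).le)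
    rcases lt_or_eq_of_le ht₀₁ with hlt | heq01
    · -- t₀ < t₁ : gap, and v t₀ = v t₁, contradiction
      have hgap : Ioo t₀ t₁ ∩ K = ∅ := by
        rw [eq_empty_iff_forall_notMem]
        rintro z ⟨⟨hz1, hz2⟩, hzK⟩
        rcases lt_trichotomy (v z) w with h | h | h
        · exact absurd (le_csSup hbddP ⟨hzK, h⟩) (not_le_of_gt hz1)
        · exact hA z hzK h
        · exact absurd (csInf_le hbddQ ⟨hzK, h⟩) (not_le_of_gt hz2)
      have heqσ : σ t₀ = σ t₁ := hKgap t₀ ht₀K t₁ ht₁K hlt hgap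
      have hveq : v t₁ = v t₀ := by
        rw [hsplit ht₀K ht₁K hlt.le, (hzero ht₀K ht₁K hlt.le).mp heqσ, add_zero]
      have ht₀P : t₀ ∈ P := by
        rcases lt_trichotomy (v t₀) w with h | h | h
        · exact ⟨ht₀K, h⟩
        · exact absurd h (hA t₀ ht₀K)
        · exfalso
          exact absurd (csInf_le hbddQ ⟨ht₀K, h⟩) (not_le_of_gt hlt)
      have ht₁Q : t₁ ∈ Q := by
        rcases lt_trichotomy (v t₁) w with h | h | h
        · exfalso
          exact absurd (le_csSup hbddP ⟨ht₁K, h⟩) (not_le_of_gt hlt)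
        · exact absurd h (hA t₁ ht₁K)
        · exact ⟨ht₁K, h⟩
      have hcon := ht₁Q.2
      rw [hveq] at hcon
      exact absurd (lt_trans ht₀P.2 hcon) (lt_irrefl _)
    · -- t₀ = t₁
      rcases lt_trichotomy (v t₀) w with hvt | hvt | hvt
      · -- approach from the right
        have hη : (0:ℝ≥0∞) < w - v t₀ := tsub_pos_of_lt hvt
        have hηtop : w - v t₀ ≠ ⊤ :=
          ne_top_of_le_ne_top (ne_top_of_le_ne_top hΛfin hw) tsub_le_self
        obtain ⟨δ, hδpos, hδ⟩ := variation_right_small hσc hK01 hΛfin ht₀K hη hηtop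
        obtain ⟨q, hqQ, hqlt⟩ := exists_lt_of_csInf_lt ⟨1, h1Q⟩
          (show sInf Q < t₀ + δ by rw [← ht₁def, ← heq01]; linarith)
        have hqt₀ : t₀ < q := by
          have h1 : t₁ ≤ q := csInf_le hbddQ hqQ
          rcases eq_or_lt_of_le (heq01 ▸ h1) with h | h
          · exfalso
            rw [← h] at hqQ
            exact absurd hqQ.2 (not_lt_of_gt hvt)
          · exact h
        have hvq : v q ≤ w := by
          rw [hsplit ht₀K hqQ.1 hqt₀.le]
          calc v t₀ + eVariationOn σ (K ∩ Icc t₀ q) ≤ v t₀ + (w - v t₀) :=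
            add_le_add_right (hδ q hqQ.1 hqt₀ hqlt) _
          _ = w := add_tsub_cancel_of_le hvt.le
        exact absurd hvq (not_le_of_gt hqQ.2)
      · exact hA t₀ ht₀K hvt
      · -- approach from the left
        have hη : (0:ℝ≥0∞) < v t₀ - w := tsub_pos_of_lt hvt
        have hηtop : v t₀ - w ≠ ⊤ := ne_top_of_le_ne_top (hvfin t₀) tsub_le_self
        obtain ⟨δ, hδpos, hδ⟩ := variation_left_small hσc hK01 hΛfin ht₀K hη hηtop
        obtain ⟨p, hpP, hplt⟩ := exists_lt_of_lt_csSup ⟨0, h0P⟩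
          (show t₀ - δ < sSup P by rw [← ht₀def]; linarith)
        have hpt₀ : p < t₀ := by
          have h1 : p ≤ t₀ := le_csSup hbddP hpP
          rcases eq_or_lt_of_le h1 with h | h
          · exfalso
            rw [h] at hpP
            exact absurd hpP.2 (not_lt_of_gt hvt)
          · exact h
        have hvp : v t₀ ≤ v p + (v t₀ - w) := by
          calc v t₀ = v p + eVariationOn σ (K ∩ Icc p t₀) := hsplit hpP.1 ht₀K hpt₀.le
          _ ≤ v p + (v t₀ - w) := add_le_add_right (hδ p hpP.1 hpt₀ hplt) _
        have hstrict : v p + (v t₀ - w) < w + (v t₀ - w) :=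
          ENNReal.add_lt_add_right hηtop hpP.2
        rw [add_tsub_cancel_of_le hvt.le] at hstrict
        exact absurd (lt_of_le_of_lt hvp hstrict) (lt_irrefl _)
  -- define the arc-length style parametrization
  set wc : ℝ → ℝ≥0∞ := fun r => min (ENNReal.ofReal r * Λ) Λ with hwc
  have hwcle : ∀ r, wc r ≤ Λ := fun r => min_le_right _ _
  have hwcIcc : ∀ r ∈ Icc (0:ℝ) 1, wc r = ENNReal.ofReal r * Λ := by
    intro r hr
    apply min_eq_left
    calc ENNReal.ofReal r * Λ ≤ 1 * Λ :=
      mul_le_mul_left (ENNReal.ofReal_le_one.mpr hr.2) Λ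
    _ = Λ := one_mul Λ
  set T : ℝ → ℝ := fun r => Classical.choose (hsurj (wc r) (hwcle r)) with hT
  have hTspec : ∀ r, T r ∈ K ∧ v (T r) = wc r := by
    intro r
    have h := Classical.choose_spec (hsurj (wc r) (hwcle r))
    exact ⟨h.1, h.2⟩
  set g : ℝ → X := fun r => σ (T r) with hg
  -- variation zero between parameters with equal v
  have hveq_sigma : ∀ {a b : ℝ}, a ∈ K → b ∈ K → v a = v b → σ a = σ b := by
    intro a b ha hb hvab
    rcases le_total a b with h | h
    · have := hsplit ha hb h
      rw [← hvab] at this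
      have hE : eVariationOn σ (K ∩ Icc a b) = 0 :=
        ((ENNReal.add_right_inj (hvfin a)).mp (by rw [← this, add_zero])).symm
      exact (hzero ha hb h).mpr hE
    · have := hsplit hb ha h
      rw [hvab] at this
      have hE : eVariationOn σ (K ∩ Icc b a) = 0 :=
        ((ENNReal.add_right_inj (hvfin b)).mp (by rw [← this, add_zero])).symm
      exact ((hzero hb ha h).mpr hE).symm
  have hsigma_veq : ∀ {a b : ℝ}, a ∈ K → b ∈ K → σ a = σ b → v a = v b := by
    intro a b ha hb hs
    rcases le_total a b with h | h
    · rw [hsplit ha hb h, (hzero ha hb h).mp hs, add_zero]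
    · rw [hsplit hb ha h, (hzero hb ha h).mp hs.symm, add_zero]
  -- injectivity
  have hginj : InjOn g (Icc 0 1) := by
    intro r hr r' hr' hgr
    have h1 := hsigma_veq (hTspec r).1 (hTspec r').1 hgr
    rw [(hTspec r).2, (hTspec r').2, hwcIcc r hr, hwcIcc r' hr'] at h1
    have h2 : ENNReal.ofReal r = ENNReal.ofReal r' :=
      (ENNReal.mul_left_inj hΛ0 hΛfin).mp h1
    rw [ENNReal.ofReal_eq_ofReal_iff hr.1 hr'.1] at h2
    exact h2
  -- Lipschitz-type estimate
  have hlip : ∀ r ∈ Icc (0:ℝ) 1, ∀ r' ∈ Icc (0:ℝ) 1, r ≤ r' →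
      edist (g r) (g r') ≤ ENNReal.ofReal (r' - r) * Λ := by
    intro r hr r' hr' hrr
    set a := T r with ha
    set b := T r' with hb
    have haK := (hTspec r).1
    have hbK := (hTspec r').1
    have hva : v a = ENNReal.ofReal r * Λ := by rw [(hTspec r).2, hwcIcc r hr]
    have hvb : v b = ENNReal.ofReal r' * Λ := by rw [(hTspec r').2, hwcIcc r' hr']
    have hsum : ENNReal.ofReal r' * Λ = ENNReal.ofReal r * Λ + ENNReal.ofReal (r' - r) * Λ := by
      rw [← add_mul, ← ENNReal.ofReal_add hr.1 (by linarith)]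
      congr 2
      ring
    rcases le_total a b with h | h
    · have hE := hsplit haK hbK h
      rw [hvb, hva, hsum] at hE
      have hE2 : eVariationOn σ (K ∩ Icc a b) = ENNReal.ofReal (r' - r) * Λ :=
        ((ENNReal.add_right_inj (by rw [← hva]; exact hvfin a)).mp hE.symm)
      calc edist (g r) (g r') = edist (σ a) (σ b) := rfl
      _ ≤ eVariationOn σ (K ∩ Icc a b) :=
        eVariationOn.edist_le σ ⟨haK, le_refl a, h⟩ ⟨hbK, h, le_refl b⟩
      _ = ENNReal.ofReal (r' - r) * Λ := hE2
    · -- b ≤ a forces v a = v b hence equal values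
      have hle : v a ≤ v b := by
        rw [hva, hvb]
        exact mul_le_mul_left (ENNReal.ofReal_le_ofReal hrr) Λ
      have hge : v b ≤ v a := hvmono h
      have : σ a = σ b := hveq_sigma haK hbK (le_antisymm hle hge)
      rw [hg]
      simp only []
      rw [← ha, ← hb, this, edist_self]
      exact zero_le
  -- endpoints
  have hg0 : g 0 = x := by
    have h0 : v (T 0) = 0 := by
      rw [(hTspec 0).2, hwcIcc 0 ⟨le_refl _, by norm_num⟩]
      simp
    show σ (T 0) = x
    rw [← hσ0]
    exact hveq_sigma (hTspec 0).1 h0K (by rw [h0, hv0])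
  have hg1 : g 1 = y := by
    have h1 : v (T 1) = Λ := by
      rw [(hTspec 1).2, hwcIcc 1 ⟨by norm_num, le_refl _⟩]
      simp
    show σ (T 1) = y
    rw [← hσ1]
    exact hveq_sigma (hTspec 1).1 h1K (by rw [h1, hv1])
  -- continuity
  have hgc : ContinuousOn g (Icc 0 1) := by
    apply LipschitzOnWith.continuousOn (K := Λ.toNNReal)
    intro r hr r' hr'
    rcases le_total r r' with h | h
    · calc edist (g r) (g r') ≤ ENNReal.ofReal (r' - r) * Λ := hlip r hr r' hr' h
      _ = Λ.toNNReal * edist r r' := by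
        rw [edist_dist, Real.dist_eq, abs_of_nonpos (by linarith), mul_comm,
          ENNReal.coe_toNNReal hΛfin]
        congr 1
        ring_nf
    · calc edist (g r) (g r') = edist (g r') (g r) := edist_comm _ _
      _ ≤ ENNReal.ofReal (r - r') * Λ := hlip r' hr' r hr h
      _ = Λ.toNNReal * edist r r' := by
        rw [edist_dist, Real.dist_eq, abs_of_nonneg (by linarith), mul_comm,
          ENNReal.coe_toNNReal hΛfin]
  -- variation bound
  have hgvar : eVariationOn g (Icc 0 1) ≤ Λ := by
    apply iSup_le
    rintro ⟨N, ⟨uu, huu, huus⟩⟩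
    simp only []
    calc (∑ i ∈ Finset.range N, edist (g (uu (i + 1))) (g (uu i)))
        ≤ ∑ i ∈ Finset.range N, ENNReal.ofReal (uu (i+1) - uu i) * Λ := by
          apply Finset.sum_le_sum
          intro i _
          rw [edist_comm]
          exact hlip (uu i) (huus i) (uu (i+1)) (huus (i+1)) (huu (Nat.le_succ i))
    _ = (∑ i ∈ Finset.range N, ENNReal.ofReal (uu (i+1) - uu i)) * Λ :=
        (Finset.sum_mul _ _ _).symm
    _ = ENNReal.ofReal (∑ i ∈ Finset.range N, (uu (i+1) - uu i)) * Λ := by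
        rw [ENNReal.ofReal_sum_of_nonneg]
        intro i _
        have := huu (Nat.le_succ i)
        linarith
    _ = ENNReal.ofReal (uu N - uu 0) * Λ := by rw [Finset.sum_range_sub (fun i => uu i)]
    _ ≤ 1 * Λ := by
        apply mul_le_mul_left
        apply ENNReal.ofReal_le_one.mpr
        linarith [(huus N).2, (huus 0).1]
    _ = Λ := one_mul Λ
  refine ⟨g, ⟨hgc, hg0, hg1⟩, hginj, ?_, le_trans hgvar hΛle⟩
  rintro _ ⟨r, hr, rfl⟩
  exact mem_image_of_mem σ (hK01 (hTspec r).1)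


end AuxLemmas

/-- A length space is a metric tree if and only if any two distinct points are joined
by a unique rectifiable arc. -/
theorem metricTree_iff_unique_rect_arcs {X : Type*} [MetricSpace X]
    (hl : IsLengthSpace X) :
    IsMetricTree X ↔ ∀ x y : X, x ≠ y → ∃! A : Set X, IsRectArc A x y := by
  constructor
  · -- a metric tree has unique rectifiable arcs
    rintro ⟨hgeo, harc⟩ x y hxy
    obtain ⟨γ, hγ, hγvar⟩ := hgeo x y
    have hfin : eVariationOn γ (Set.Icc 0 1) ≠ ⊤ := by
      rw [hγvar]; exact edist_ne_top x y
    obtain ⟨g, hgc, hgi, hgsub, hgvar⟩ := extract_arc hγ hxy hfin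
    obtain ⟨A', hA', hA'uniq⟩ := harc x y hxy
    have hgA' : g '' Set.Icc 0 1 = A' := hA'uniq _ ⟨g, hgc, hgi, rfl⟩
    refine ⟨g '' Set.Icc 0 1, ⟨g, hgc, hgi, rfl, ne_top_of_le_ne_top hfin hgvar⟩, ?_⟩
    rintro B ⟨σ, hσc, hσi, hσim, -⟩
    rw [hgA']
    exact hA'uniq B ⟨σ, hσc, hσi, hσim⟩
  · -- unique rectifiable arcs give a metric tree
    intro h
    have hgeo : IsGeodesicSpace X := by
      intro x y
      by_cases hxy : x = y
      · subst hxy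
        refine ⟨fun _ => x, ⟨continuousOn_const, rfl, rfl⟩, ?_⟩
        rw [edist_self]
        apply eVariationOn.constant_on
        rintro _ ⟨s, _, rfl⟩ _ ⟨t, _, rfl⟩
        rfl
      · obtain ⟨A, hA, hAuniq⟩ := h x y hxy
        obtain ⟨γ, ⟨hγc, hγ0, hγ1⟩, hγi, hγim, hγfin⟩ := hA
        refine ⟨γ, ⟨hγc, hγ0, hγ1⟩, le_antisymm ?_ ?_⟩
        · rw [hl x y]
          apply le_sInf
          rintro ℓ ⟨σ, hσ, rfl⟩
          by_cases hσfin : eVariationOn σ (Set.Icc 0 1) = ⊤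
          · rw [hσfin]; exact le_top
          obtain ⟨g, hgcurve, hgi, hgsub, hgvar⟩ := extract_arc hσ hxy hσfin
          have hBeq : g '' Set.Icc 0 1 = A :=
            hAuniq _ ⟨g, hgcurve, hgi, rfl, ne_top_of_le_ne_top hσfin hgvar⟩
          have hsame := var_eq_of_same_image hγc hγ0 hγ1 hγi hgcurve.1 hgcurve.2.1
            hgcurve.2.2 hgi (by rw [hγim, hBeq])
          rw [hsame]
          exact hgvar
        · have := eVariationOn.edist_le γ (Set.left_mem_Icc.mpr (by norm_num : (0:ℝ) ≤ 1))
            (Set.right_mem_Icc.mpr (by norm_num : (0:ℝ) ≤ 1))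
          rw [hγ0, hγ1] at this
          exact this
    refine ⟨hgeo, ?_⟩
    intro x y hxy
    obtain ⟨A, hA, hAuniq⟩ := h x y hxy
    obtain ⟨γ, ⟨hγc, hγ0, hγ1⟩, hγi, hγim, hγfin⟩ := hA
    refine ⟨A, ⟨γ, ⟨hγc, hγ0, hγ1⟩, hγi, hγim⟩, ?_⟩
    rintro B ⟨σ, ⟨hσc, hσ0, hσ1⟩, hσi, hσim⟩
    have hAcl : IsClosed A := by
      rw [← hγim]
      exact (isCompact_Icc.image_of_continuousOn hγc).isClosed
    have hxA : x ∈ A := by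
      rw [← hγim]
      exact ⟨0, Set.left_mem_Icc.mpr (by norm_num), hγ0⟩
    have hyA : y ∈ A := by
      rw [← hγim]
      exact ⟨1, Set.right_mem_Icc.mpr (by norm_num), hγ1⟩
    -- first, B ⊆ A
    have hsub : B ⊆ A := by
      by_contra hcon
      obtain ⟨p, hpB, hpA⟩ := not_subset.mp hcon
      rw [← hσim] at hpB
      obtain ⟨t, ht01, rfl⟩ := hpB
      set Sl := Set.Icc 0 t ∩ σ ⁻¹' A with hSl
      set Su := Set.Icc t 1 ∩ σ ⁻¹' A with hSu
      have hSlcl : IsClosed Sl :=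
        (hσc.mono (Set.Icc_subset_Icc le_rfl ht01.2)).preimage_isClosed_of_isClosed
          isClosed_Icc hAcl
      have hSucl : IsClosed Su :=
        (hσc.mono (Set.Icc_subset_Icc ht01.1 le_rfl)).preimage_isClosed_of_isClosed
          isClosed_Icc hAcl
      have h0Sl : (0:ℝ) ∈ Sl := ⟨⟨le_rfl, ht01.1⟩, by
        show σ 0 ∈ A; rw [hσ0]; exact hxA⟩
      have h1Su : (1:ℝ) ∈ Su := ⟨⟨ht01.2, le_rfl⟩, by
        show σ 1 ∈ A; rw [hσ1]; exact hyA⟩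
      set s₀ := sSup Sl with hs₀def
      set t₀ := sInf Su with ht₀def
      have hs₀ : s₀ ∈ Sl := IsClosed.csSup_mem hSlcl ⟨0, h0Sl⟩
        (BddAbove.mono Set.inter_subset_left bddAbove_Icc)
      have ht₀ : t₀ ∈ Su := IsClosed.csInf_mem hSucl ⟨1, h1Su⟩
        (BddBelow.mono Set.inter_subset_left bddBelow_Icc)
      have hs₀t : s₀ < t := lt_of_le_of_ne hs₀.1.2 (by
        intro hc
        rw [hc] at hs₀
        exact hpA hs₀.2)
      have htt₀ : t < t₀ := lt_of_le_of_ne ht₀.1.1 (by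
        intro hc
        rw [← hc] at ht₀
        exact hpA ht₀.2)
      have hs₀01 : s₀ ∈ Set.Icc (0:ℝ) 1 := ⟨hs₀.1.1, le_trans hs₀.1.2 ht01.2⟩
      have ht₀01 : t₀ ∈ Set.Icc (0:ℝ) 1 := ⟨le_trans ht01.1 ht₀.1.1, ht₀.1.2⟩
      have hnotA1 : ∀ s, s₀ < s → s ≤ t → σ s ∉ A := by
        intro s h1 h2 hc
        have : s ∈ Sl := ⟨⟨le_trans hs₀.1.1 (le_of_lt h1), h2⟩, hc⟩
        exact absurd (le_csSup (BddAbove.mono Set.inter_subset_left bddAbove_Icc) this)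
          (not_le_of_gt h1)
      have hnotA2 : ∀ s, t ≤ s → s < t₀ → σ s ∉ A := by
        intro s h1 h2 hc
        have : s ∈ Su := ⟨⟨h1, le_trans (le_of_lt h2) ht₀.1.2⟩, hc⟩
        exact absurd (csInf_le (BddBelow.mono Set.inter_subset_left bddBelow_Icc) this)
          (not_le_of_gt h2)
      set a := σ s₀ with hadef
      set b := σ t₀ with hbdef
      have hab : a ≠ b := by
        intro hc
        have := hσi hs₀01 ht₀01 hc
        linarith
      have honly : ∀ s, s₀ ≤ s → s ≤ t₀ → σ s ∈ A → s = s₀ ∨ s = t₀ := by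
        intro s h1 h2 hs
        rcases le_or_gt s t with hst | hst
        · rcases eq_or_lt_of_le h1 with he | he
          · exact Or.inl he.symm
          · exact absurd hs (hnotA1 s he hst)
        · rcases eq_or_lt_of_le h2 with he | he
          · exact Or.inr he
          · exact absurd hs (hnotA2 s hst.le he)
      have haA : a ∈ A := hs₀.2
      have hbA : b ∈ A := ht₀.2
      obtain ⟨u', hu'01, hau⟩ : ∃ u' ∈ Set.Icc (0:ℝ) 1, γ u' = a := by
        rw [← hγim] at haA; exact haA
      obtain ⟨v', hv'01, hbv⟩ : ∃ v' ∈ Set.Icc (0:ℝ) 1, γ v' = b := by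
        rw [← hγim] at hbA; exact hbA
      have hu'v' : u' ≠ v' := by
        intro hc
        exact hab (by rw [← hau, ← hbv, hc])
      obtain ⟨δ₁, hδ₁curve, hδ₁i, hδ₁im, hδ₁var⟩ := exists_subcurve hγc hγi hu'01 hv'01 hu'v'
      have hδ₁fin : eVariationOn δ₁ (Set.Icc 0 1) ≠ ⊤ := ne_top_of_le_ne_top hγfin hδ₁var
      set w := (u' + v')/2 with hwdef
      have hw_mem : w ∈ Set.uIcc u' v' := by
        rcases le_total u' v' with hc | hc
        · rw [Set.uIcc_of_le hc]
          exact ⟨by simp only [hwdef]; linarith, by simp only [hwdef]; linarith⟩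
        · rw [Set.uIcc_of_ge hc]
          exact ⟨by simp only [hwdef]; linarith, by simp only [hwdef]; linarith⟩
      have hw01 : w ∈ Set.Icc (0:ℝ) 1 := Set.uIcc_subset_Icc hu'01 hv'01 hw_mem
      set q := γ w with hqdef
      have hwu : w ≠ u' := by
        intro hc
        apply hu'v'
        simp only [hwdef] at hc
        linarith
      have hwv : w ≠ v' := by
        intro hc
        apply hu'v'
        simp only [hwdef] at hc
        linarith
      have hqa : q ≠ a := by
        intro hc
        rw [← hau] at hc
        exact hwu (hγi hw01 hu'01 hc)
      have hqb : q ≠ b := by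
        intro hc
        rw [← hbv] at hc
        exact hwv (hγi hw01 hv'01 hc)
      have hqA : q ∈ A := by rw [← hγim]; exact Set.mem_image_of_mem γ hw01
      have hqE1 : q ∈ δ₁ '' Set.Icc 0 1 := by
        rw [hδ₁im]; exact Set.mem_image_of_mem γ hw_mem
      set B'' := σ '' Set.Icc s₀ t₀ with hB''def
      have hs₀t₀ : s₀ ≤ t₀ := by linarith
      have hIccsub : Set.Icc s₀ t₀ ⊆ Set.Icc (0:ℝ) 1 :=
        Set.Icc_subset_Icc hs₀01.1 ht₀01.2
      have hqB'' : q ∉ B'' := by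
        rintro ⟨s, hs, hqs⟩
        have hsA : σ s ∈ A := by rw [hqs]; exact hqA
        rcases honly s hs.1 hs.2 hsA with he | he
        · exact hqa (by rw [← hqs, he])
        · exact hqb (by rw [← hqs, he])
      have hB''cpt : IsCompact B'' :=
        isCompact_Icc.image_of_continuousOn (hσc.mono hIccsub)
      have hB''ne : B''.Nonempty := ⟨a, s₀, ⟨le_rfl, hs₀t₀⟩, rfl⟩
      set ε := infDist q B'' with hεdef
      have hε : 0 < ε := (hB''cpt.isClosed.notMem_iff_infDist_pos hB''ne).mp hqB''
      have huc := isCompact_Icc.uniformContinuousOn_of_continuous (hσc.mono hIccsub)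
      rw [Metric.uniformContinuousOn_iff] at huc
      obtain ⟨δ₂, hδ₂pos, hδ₂⟩ := huc (ε/4) (by linarith)
      obtain ⟨n, hn⟩ := exists_nat_gt ((t₀ - s₀)/δ₂)
      have hts : (0:ℝ) < t₀ - s₀ := by linarith
      have hnpos : (0:ℝ) < n := lt_trans (div_pos hts hδ₂pos) hn
      have hn0 : (n:ℝ) ≠ 0 := ne_of_gt hnpos
      set step := (t₀ - s₀)/n with hstepdef
      have hstep_nonneg : 0 ≤ step := div_nonneg hts.le hnpos.le
      have hstep_lt : step < δ₂ := by
        rw [hstepdef, div_lt_iff₀ hnpos, mul_comm]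
        calc t₀ - s₀ = ((t₀ - s₀)/δ₂) * δ₂ := by field_simp
        _ < n * δ₂ := mul_lt_mul_of_pos_right hn hδ₂pos
      set r : ℕ → ℝ := fun i => s₀ + i * step with hrdef
      set f : ℕ → X := fun i => σ (r i) with hfdef
      have hr_mem : ∀ i ≤ n, r i ∈ Set.Icc s₀ t₀ := by
        intro i hi
        constructor
        · simp only [hrdef]
          have : (0:ℝ) ≤ i * step := mul_nonneg (Nat.cast_nonneg i) hstep_nonneg
          linarith
        · simp only [hrdef]
          have h1 : (i:ℝ) * step ≤ n * step :=
            mul_le_mul_of_nonneg_right (by exact_mod_cast hi) hstep_nonneg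
          have h2 : (n:ℝ) * step = t₀ - s₀ := by
            rw [hstepdef]; field_simp
          linarith
      have hr0 : r 0 = s₀ := by simp [hrdef]
      have hrn : r n = t₀ := by
        simp only [hrdef, hstepdef]
        field_simp
        ring
      have hchain_hyp : ∀ i < n, ∃ c : ℝ → X, IsCurveOn c (f i) (f (i+1)) ∧
          eVariationOn c (Set.Icc 0 1) ≠ ⊤ ∧ c '' Set.Icc 0 1 ⊆ {q}ᶜ := by
        intro i hi
        have hd : dist (f i) (f (i+1)) < ε/4 := by
          apply hδ₂ _ (hr_mem i hi.le) _ (hr_mem (i+1) hi)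
          rw [Real.dist_eq]
          have : r i - r (i+1) = -step := by
            simp only [hrdef]
            push_cast
            ring
          rw [this, abs_neg, abs_of_nonneg hstep_nonneg]
          exact hstep_lt
        have hedist : edist (f i) (f (i+1)) < ENNReal.ofReal (ε/2) := by
          rw [edist_dist]
          exact (ENNReal.ofReal_lt_ofReal_iff (by linarith)).mpr (by linarith)
        rw [hl (f i) (f (i+1))] at hedist
        obtain ⟨ℓ, hℓmem, hℓlt⟩ := sInf_lt_iff.mp hedist
        obtain ⟨c, hccurve, hcvar⟩ := hℓmem
        refine ⟨c, hccurve, by rw [hcvar]; exact ne_top_of_lt hℓlt, ?_⟩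
        rintro _ ⟨s, hs01, rfl⟩
        rw [Set.mem_compl_singleton_iff]
        intro hc
        have h1 : edist (f i) (c s) ≤ ℓ := by
          rw [← hccurve.2.1, ← hcvar]
          exact eVariationOn.edist_le c (Set.left_mem_Icc.mpr (by norm_num)) hs01
        have h2 : dist (f i) (c s) < ε/2 := by
          have h3 := lt_of_le_of_lt h1 hℓlt
          rw [edist_dist] at h3
          exact (ENNReal.ofReal_lt_ofReal_iff (by linarith)).mp h3
        have h3 : ε ≤ dist q (f i) :=
          infDist_le_dist_of_mem ⟨r i, hr_mem i hi.le, rfl⟩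
        rw [hc] at h2
        rw [dist_comm] at h3
        linarith
      have hf0 : f 0 ∈ ({q}ᶜ : Set X) := by
        rw [Set.mem_compl_singleton_iff]
        show σ (r 0) ≠ q
        rw [hr0]
        exact fun hc => hqa hc.symm
      obtain ⟨cc, hcccurve, hccfin, hccsub⟩ := exists_chain f n hf0 hchain_hyp
      have hcccurve' : IsCurveOn cc a b := by
        obtain ⟨h1, h2, h3⟩ := hcccurve
        refine ⟨h1, ?_, ?_⟩
        · rw [h2]; show σ (r 0) = a; rw [hr0]
        · rw [h3]; show σ (r n) = b; rw [hrn]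
      obtain ⟨g₂, hg₂curve, hg₂i, hg₂sub, hg₂var⟩ := extract_arc hcccurve' hab hccfin
      obtain ⟨E, hE, hEuniq⟩ := h a b hab
      have hδ₁curve' : IsCurveOn δ₁ a b := by
        obtain ⟨h1, h2, h3⟩ := hδ₁curve
        exact ⟨h1, h2.trans hau, h3.trans hbv⟩
      have hE1 : δ₁ '' Set.Icc 0 1 = E := hEuniq _ ⟨δ₁, hδ₁curve', hδ₁i, rfl, hδ₁fin⟩
      have hE2 : g₂ '' Set.Icc 0 1 = E :=
        hEuniq _ ⟨g₂, hg₂curve, hg₂i, rfl, ne_top_of_le_ne_top hccfin hg₂var⟩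
      have hqE : q ∈ g₂ '' Set.Icc 0 1 := by rw [hE2, ← hE1]; exact hqE1
      have := hccsub (hg₂sub hqE)
      rw [Set.mem_compl_singleton_iff] at this
      exact this rfl
    -- then, A ⊆ B by the intermediate value theorem
    obtain ⟨ψ, hψc, hψl, hψr⟩ := exists_param_inverse hγc hγi
    have hmt : Set.MapsTo σ (Set.Icc 0 1) (γ '' Set.Icc 0 1) := by
      intro s hs
      rw [hγim]
      exact hsub (by rw [← hσim]; exact Set.mem_image_of_mem σ hs)
    have hHc : ContinuousOn (ψ ∘ σ) (Set.Icc 0 1) := hψc.comp hσc hmt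
    have hH0 : (ψ ∘ σ) 0 = 0 := by
      show ψ (σ 0) = 0
      rw [hσ0, ← hγ0, hψl 0 (Set.left_mem_Icc.mpr (by norm_num))]
    have hH1 : (ψ ∘ σ) 1 = 1 := by
      show ψ (σ 1) = 1
      rw [hσ1, ← hγ1, hψl 1 (Set.right_mem_Icc.mpr (by norm_num))]
    have hIVT := intermediate_value_Icc (by norm_num : (0:ℝ) ≤ 1) hHc
    rw [hH0, hH1] at hIVT
    apply Set.Subset.antisymm hsub
    intro z hz
    rw [← hγim] at hz
    obtain ⟨w0, hw0, rfl⟩ := hz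
    obtain ⟨s, hs01, hHs⟩ := hIVT hw0
    have hz2 : γ ((ψ ∘ σ) s) = σ s := (hψr (σ s) (hmt hs01)).2
    rw [hHs] at hz2
    rw [hz2, ← hσim]
    exact Set.mem_image_of_mem σ hs01
end

section
/- Let X be a metric tree and T⊂X a closed non-empty subset that is itself a metric tree. Then there exists a 1-Lipschitz retraction r:X→T (i.e., r restricted to T is the identity and d(r(x),r(y))≤d(x,y) for all x,y) such that moreover d(x,r(x))=dist(x,T) for all x∈X. -/
open Set Metric
open scoped ENNReal NNReal

section Aux
variable {X : Type*} [MetricSpace X]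

/-- betweenness -/
def MBtw (x m y : X) : Prop := dist x m + dist m y = dist x y

lemma mbtw_trans {x m y p : X} (h1 : MBtw x m y) (h2 : MBtw x p m) : MBtw x p y := by
  unfold MBtw at *
  have t1 := dist_triangle x p y
  have t2 := dist_triangle p m y
  have t3 := dist_triangle x p m
  nlinarith [dist_nonneg (x := p) (y := m)]

/-- main structural predicate: isometric geodesic parameterization -/
def IsGeo (ι : ℝ → X) (x y : X) : Prop :=
  LipschitzWith 1 ι ∧ ι 0 = x ∧ ι (dist x y) = y ∧
    ∀ a ∈ Set.Icc (0:ℝ) (dist x y), ∀ b ∈ Set.Icc (0:ℝ) (dist x y),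
      dist (ι a) (ι b) = |a - b|

lemma clip_lip (D a b : ℝ) : |max 0 (min a D) - max 0 (min b D)| ≤ |a - b| := by
  rw [max_comm 0 (min a D), max_comm 0 (min b D)]
  refine (abs_max_sub_max_le_abs _ _ _).trans ?_
  refine (abs_min_sub_min_le_max a D b D).trans ?_
  simp

lemma exists_geo_of_curve {x y : X} (γ : ℝ → X) (hγ : IsCurveOn γ x y)
    (hlen : eVariationOn γ (Set.Icc 0 1) = edist x y) :
    ∃ ι : ℝ → X, IsGeo ι x y ∧ ∀ a, ι a ∈ γ '' Set.Icc (0:ℝ) 1 := by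
  obtain ⟨hcont, h0, h1⟩ := hγ
  set D := dist x y with hD
  have hD0 : 0 ≤ D := dist_nonneg
  -- key pointwise facts
  have key : ∀ s ∈ Set.Icc (0:ℝ) 1, ∀ t ∈ Set.Icc (0:ℝ) 1, s ≤ t →
      dist x (γ s) + dist (γ s) (γ t) + dist (γ t) y = D := by
    intro s hs t ht hst
    have i1 : Set.Icc (0:ℝ) 1 ∩ Set.Icc 0 s = Set.Icc 0 s :=
      Set.inter_eq_self_of_subset_right (Set.Icc_subset_Icc le_rfl (hst.trans ht.2))
    have i2 : Set.Icc (0:ℝ) 1 ∩ Set.Icc s t = Set.Icc s t :=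
      Set.inter_eq_self_of_subset_right (Set.Icc_subset_Icc hs.1 ht.2)
    have i3 : Set.Icc (0:ℝ) 1 ∩ Set.Icc 0 t = Set.Icc 0 t :=
      Set.inter_eq_self_of_subset_right (Set.Icc_subset_Icc le_rfl ht.2)
    have i4 : Set.Icc (0:ℝ) 1 ∩ Set.Icc t 1 = Set.Icc t 1 :=
      Set.inter_eq_self_of_subset_right (Set.Icc_subset_Icc ht.1 le_rfl)
    have i5 : Set.Icc (0:ℝ) 1 ∩ Set.Icc 0 1 = Set.Icc 0 1 := Set.inter_self _
    have hsplit1 : eVariationOn γ (Set.Icc (0:ℝ) s) + eVariationOn γ (Set.Icc s t)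
        = eVariationOn γ (Set.Icc 0 t) := by
      have := eVariationOn.Icc_add_Icc γ (s := Set.Icc (0:ℝ) 1) hs.1 hst hs
      rwa [i1, i2, i3] at this
    have hsplit2 : eVariationOn γ (Set.Icc (0:ℝ) t) + eVariationOn γ (Set.Icc t 1)
        = eVariationOn γ (Set.Icc 0 1) := by
      have := eVariationOn.Icc_add_Icc γ (s := Set.Icc (0:ℝ) 1) ht.1 ht.2 ht
      rwa [i3, i4, i5] at this
    have e1 : edist (γ 0) (γ s) ≤ eVariationOn γ (Set.Icc (0:ℝ) s) :=
      eVariationOn.edist_le γ (Set.left_mem_Icc.2 hs.1) (Set.right_mem_Icc.2 hs.1)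
    have e2 : edist (γ s) (γ t) ≤ eVariationOn γ (Set.Icc s t) :=
      eVariationOn.edist_le γ (Set.left_mem_Icc.2 hst) (Set.right_mem_Icc.2 hst)
    have e3 : edist (γ t) (γ 1) ≤ eVariationOn γ (Set.Icc t 1) :=
      eVariationOn.edist_le γ (Set.left_mem_Icc.2 ht.2) (Set.right_mem_Icc.2 ht.2)
    have tri : edist (γ 0) (γ 1) ≤ edist (γ 0) (γ s) + edist (γ s) (γ t) + edist (γ t) (γ 1) :=
      calc edist (γ 0) (γ 1) ≤ edist (γ 0) (γ t) + edist (γ t) (γ 1) := edist_triangle _ _ _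
        _ ≤ edist (γ 0) (γ s) + edist (γ s) (γ t) + edist (γ t) (γ 1) := by
            gcongr; exact edist_triangle _ _ _
    have hub : edist (γ 0) (γ s) + edist (γ s) (γ t) + edist (γ t) (γ 1) ≤ edist x y := by
      calc edist (γ 0) (γ s) + edist (γ s) (γ t) + edist (γ t) (γ 1)
          ≤ eVariationOn γ (Set.Icc (0:ℝ) s) + eVariationOn γ (Set.Icc s t)
            + eVariationOn γ (Set.Icc t 1) := by gcongr
        _ = eVariationOn γ (Set.Icc 0 1) := by rw [hsplit1, hsplit2]
        _ = edist x y := hlen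
    have heq : edist (γ 0) (γ s) + edist (γ s) (γ t) + edist (γ t) (γ 1) = edist x y := by
      refine le_antisymm hub ?_
      calc edist x y = edist (γ 0) (γ 1) := by rw [h0, h1]
        _ ≤ _ := tri
    have f1 : edist (γ 0) (γ s) ≠ ⊤ := edist_ne_top _ _
    have f2 : edist (γ s) (γ t) ≠ ⊤ := edist_ne_top _ _
    have f3 : edist (γ t) (γ 1) ≠ ⊤ := edist_ne_top _ _
    have := congrArg ENNReal.toReal heq
    rw [ENNReal.toReal_add (ENNReal.add_ne_top.2 ⟨f1, f2⟩) f3, ENNReal.toReal_add f1 f2] at this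
    simpa [← dist_edist, h0, h1] using this
  have key2 : ∀ s ∈ Set.Icc (0:ℝ) 1, dist x (γ s) + dist (γ s) y = D := by
    intro s hs
    have := key s hs 1 (Set.right_mem_Icc.2 zero_le_one) hs.2
    simp only [h1] at this
    simpa using this
  have key3 : ∀ s ∈ Set.Icc (0:ℝ) 1, ∀ t ∈ Set.Icc (0:ℝ) 1, s ≤ t →
      dist (γ s) (γ t) = dist x (γ t) - dist x (γ s) := by
    intro s hs t ht hst
    have h1' := key s hs t ht hst
    have h2' := key2 t ht
    have tr1 := dist_triangle x (γ s) (γ t)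
    have tr2 := dist_triangle (γ s) (γ t) y
    linarith
  have hfc : ContinuousOn (fun s => dist x (γ s)) (Set.Icc (0:ℝ) 1) :=
    (continuous_const.dist continuous_id).comp_continuousOn hcont
  have hsurj : Set.Icc (0:ℝ) D ⊆ (fun s => dist x (γ s)) '' Set.Icc 0 1 := by
    have := intermediate_value_Icc (zero_le_one (α := ℝ)) hfc
    simpa [h0, h1] using this
  have hsel : ∀ a, a ∈ Set.Icc (0:ℝ) D → ∃ s, s ∈ Set.Icc (0:ℝ) 1 ∧ dist x (γ s) = a := by
    intro a ha; obtain ⟨s, hs, hfs⟩ := hsurj ha; exact ⟨s, hs, hfs⟩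
  choose g hg1 hg2 using hsel
  have hcmem : ∀ a : ℝ, max 0 (min a D) ∈ Set.Icc (0:ℝ) D := fun a =>
    ⟨le_max_left _ _, max_le hD0 (min_le_right _ _)⟩
  have hcid : ∀ a ∈ Set.Icc (0:ℝ) D, max 0 (min a D) = a := by
    intro a ha; rw [min_eq_left ha.2, max_eq_right ha.1]
  -- isometry property for g-points
  have hiso : ∀ a (ha : a ∈ Set.Icc (0:ℝ) D) b (hb : b ∈ Set.Icc (0:ℝ) D),
      dist (γ (g a ha)) (γ (g b hb)) = |a - b| := by
    intro a ha b hb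
    rcases le_total (g a ha) (g b hb) with h | h
    · have e := key3 _ (hg1 a ha) _ (hg1 b hb) h
      rw [hg2, hg2] at e
      have hab : a ≤ b := by
        have := dist_nonneg (x := γ (g a ha)) (y := γ (g b hb)); linarith
      rw [e, abs_of_nonpos (by linarith)]; ring
    · have e := key3 _ (hg1 b hb) _ (hg1 a ha) h
      rw [hg2, hg2] at e
      have hab : b ≤ a := by
        have := dist_nonneg (x := γ (g b hb)) (y := γ (g a ha)); linarith
      rw [dist_comm, e, abs_of_nonneg (by linarith)]
  refine ⟨fun a => γ (g (max 0 (min a D)) (hcmem a)), ⟨?_, ?_, ?_, ?_⟩,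
    fun a => ⟨_, hg1 _ _, rfl⟩⟩
  · apply LipschitzWith.of_dist_le_mul
    intro a b
    rw [hiso _ (hcmem a) _ (hcmem b)]
    simpa [Real.dist_eq] using clip_lip D a b
  · show γ (g (max 0 (min 0 D)) (hcmem 0)) = x
    have h' := (hg2 _ (hcmem 0)).trans (hcid 0 (Set.left_mem_Icc.2 hD0))
    exact (dist_eq_zero.1 h').symm
  · show γ (g (max 0 (min D D)) (hcmem D)) = y
    have h' := (hg2 _ (hcmem D)).trans (hcid D (Set.right_mem_Icc.2 hD0))
    have h2' := key2 _ (hg1 _ (hcmem D))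
    have : dist (γ (g (max 0 (min D D)) (hcmem D))) y = 0 := by linarith
    exact dist_eq_zero.1 this
  · intro a ha b hb
    show dist (γ (g (max 0 (min a D)) (hcmem a))) (γ (g (max 0 (min b D)) (hcmem b))) = |a - b|
    rw [hiso _ (hcmem a) _ (hcmem b), hcid a ha, hcid b hb]

end Aux

section Aux2
variable {X : Type*} [MetricSpace X]

lemma geo_dist_left {x y : X} {ι : ℝ → X} (hι : IsGeo ι x y) {c : ℝ}
    (hc : c ∈ Set.Icc (0:ℝ) (dist x y)) : dist x (ι c) = c := by
  have := hι.2.2.2 0 (Set.left_mem_Icc.2 dist_nonneg) c hc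
  rw [hι.2.1] at this
  rw [this, abs_of_nonpos (by linarith [hc.1])]; ring

lemma geo_dist_right {x y : X} {ι : ℝ → X} (hι : IsGeo ι x y) {c : ℝ}
    (hc : c ∈ Set.Icc (0:ℝ) (dist x y)) : dist (ι c) y = dist x y - c := by
  have := hι.2.2.2 c hc (dist x y) (Set.right_mem_Icc.2 dist_nonneg)
  rw [hι.2.2.1] at this
  rw [this, abs_of_nonpos (by linarith [hc.2])]; ring

lemma geo_mbtw {x y : X} {ι : ℝ → X} (hι : IsGeo ι x y) {c : ℝ}
    (hc : c ∈ Set.Icc (0:ℝ) (dist x y)) : MBtw x (ι c) y := by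
  unfold MBtw
  rw [geo_dist_left hι hc, geo_dist_right hι hc]; ring

lemma geo_injOn {x y : X} {ι : ℝ → X} (hι : IsGeo ι x y) :
    Set.InjOn ι (Set.Icc (0:ℝ) (dist x y)) := by
  intro a ha b hb h
  have := hι.2.2.2 a ha b hb
  rw [h, dist_self] at this
  have := abs_eq_zero.1 this.symm
  linarith

lemma mem_geo_eq {x y : X} {ι : ℝ → X} (hι : IsGeo ι x y) {m : X}
    (hm : m ∈ ι '' Set.Icc (0:ℝ) (dist x y)) :
    dist x m ∈ Set.Icc (0:ℝ) (dist x y) ∧ m = ι (dist x m) ∧ MBtw x m y := by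
  obtain ⟨c, hc, rfl⟩ := hm
  rw [geo_dist_left hι hc]
  exact ⟨hc, rfl, geo_mbtw hι hc⟩

lemma isGeo_isArc {x y : X} (hxy : x ≠ y) {ι : ℝ → X} (hι : IsGeo ι x y) :
    IsArc (ι '' Set.Icc (0:ℝ) (dist x y)) x y := by
  set D := dist x y with hD
  have hD0 : 0 < D := dist_pos.2 hxy
  refine ⟨fun t => ι (t * D), ⟨?_, ?_, ?_⟩, ?_, ?_⟩
  · exact (hι.1.continuous.comp (continuous_id.mul continuous_const)).continuousOn
  · simp [hι.2.1]
  · simp [hι.2.2.1]; exact hι.2.2.1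
  · intro t ht t' ht' h
    have hm1 : t * D ∈ Set.Icc (0:ℝ) D :=
      ⟨mul_nonneg ht.1 hD0.le, by nlinarith [ht.2, ht.1]⟩
    have hm2 : t' * D ∈ Set.Icc (0:ℝ) D :=
      ⟨mul_nonneg ht'.1 hD0.le, by nlinarith [ht'.2, ht'.1]⟩
    have := geo_injOn hι hm1 hm2 h
    exact mul_right_cancel₀ hD0.ne' this
  · have himg : (fun t : ℝ => t * D) '' Set.Icc 0 1 = Set.Icc 0 D := by
      ext u
      simp only [Set.mem_image, Set.mem_Icc]
      constructor
      · rintro ⟨t, ⟨ht1, ht2⟩, rfl⟩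
        exact ⟨mul_nonneg ht1 hD0.le, by nlinarith⟩
      · rintro ⟨h1, h2⟩
        exact ⟨u / D, ⟨div_nonneg h1 hD0.le, (div_le_one hD0).2 h2⟩, div_mul_cancel₀ u hD0.ne'⟩
    rw [show (fun t => ι (t * D)) = ι ∘ (fun t : ℝ => t * D) from rfl, Set.image_comp, himg]

lemma mbtw_mem_geo (hX : IsMetricTree X) {x y : X} {ι : ℝ → X} (hι : IsGeo ι x y)
    {m : X} (hm : MBtw x m y) : m ∈ ι '' Set.Icc (0:ℝ) (dist x y) := by
  classical
  rcases eq_or_ne x y with rfl | hxy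
  · have hd : dist x m = 0 := by
      unfold MBtw at hm
      rw [dist_comm m x, dist_self] at hm
      have := dist_nonneg (x := x) (y := m)
      have := dist_nonneg (x := m) (y := x)
      linarith [dist_nonneg (x := m) (y := x)]
    have : m = x := (dist_eq_zero.1 hd).symm
    exact ⟨0, Set.left_mem_Icc.2 dist_nonneg, by rw [hι.2.1, this]⟩
  rcases eq_or_ne m x with rfl | hmx
  · exact ⟨0, Set.left_mem_Icc.2 dist_nonneg, hι.2.1⟩
  rcases eq_or_ne m y with rfl | hmy
  · exact ⟨dist x m, Set.right_mem_Icc.2 dist_nonneg, hι.2.2.1⟩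
  set D := dist x y with hD
  set a := dist x m with ha
  set b := dist m y with hb
  have hab : a + b = D := hm
  have ha0 : 0 < a := dist_pos.2 (Ne.symm hmx)
  have hb0 : 0 < b := dist_pos.2 hmy
  have hD0 : 0 < D := by linarith
  obtain ⟨γ1, hγ1, hl1⟩ := hX.1 x m
  obtain ⟨ι1, hι1, _⟩ := exists_geo_of_curve γ1 hγ1 hl1
  obtain ⟨γ2, hγ2, hl2⟩ := hX.1 m y
  obtain ⟨ι2, hι2, _⟩ := exists_geo_of_curve γ2 hγ2 hl2
  set κ : ℝ → X := fun t => if t * D ≤ a then ι1 (t * D) else ι2 (t * D - a) with hκ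
  have hκcont : Continuous κ := by
    refine Continuous.if_le ?_ ?_ (continuous_id.mul continuous_const) continuous_const ?_
    · exact hι1.1.continuous.comp (continuous_id.mul continuous_const)
    · exact hι2.1.continuous.comp ((continuous_id.mul continuous_const).sub continuous_const)
    · intro t h
      rw [h]
      have e1 : ι1 a = m := hι1.2.2.1
      have e2 : ι2 (a - a) = m := by
        rw [sub_self]; exact hι2.2.1
      rw [e1, e2]
  -- pointwise distance facts
  have hval1 : ∀ t : ℝ, 0 ≤ t → t * D ≤ a →
      dist x (κ t) = t * D ∧ dist (κ t) m = a - t * D := by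
    intro t ht h
    have hmem : t * D ∈ Set.Icc (0:ℝ) (dist x m) := ⟨mul_nonneg ht hD0.le, h⟩
    have : κ t = ι1 (t * D) := if_pos h
    rw [this, geo_dist_left hι1 hmem, geo_dist_right hι1 hmem]
    exact ⟨rfl, rfl⟩
  have hval2 : ∀ t : ℝ, t ≤ 1 → ¬(t * D ≤ a) →
      dist m (κ t) = t * D - a ∧ dist (κ t) y = D - t * D := by
    intro t ht h
    push_neg at h
    have hmem : t * D - a ∈ Set.Icc (0:ℝ) (dist m y) := by
      constructor
      · linarith
      · rw [← hb]; nlinarith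
    have : κ t = ι2 (t * D - a) := if_neg (by push_neg; exact h)
    rw [this, geo_dist_left hι2 hmem, geo_dist_right hι2 hmem]
    refine ⟨rfl, ?_⟩
    have hbd : dist m y = b := rfl
    rw [hbd]; linarith
  have harc : IsArc (κ '' Set.Icc (0:ℝ) 1) x y := by
    refine ⟨κ, ⟨hκcont.continuousOn, ?_, ?_⟩, ?_, rfl⟩
    · have : κ 0 = ι1 (0 * D) := if_pos (by rw [zero_mul]; exact ha0.le)
      rw [this, zero_mul, hι1.2.1]
    · have : κ 1 = ι2 (1 * D - a) := if_neg (by rw [one_mul]; linarith)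
      rw [this, one_mul]
      have : D - a = dist m y := by rw [← hb]; linarith
      rw [this, hι2.2.2.1]
    · intro t ht t' ht' h
      rcases le_or_gt (t * D) a with h1 | h1 <;> rcases le_or_gt (t' * D) a with h2 | h2
      · simp only [hκ] at h
        rw [if_pos h1, if_pos h2] at h
        have := geo_injOn hι1 (⟨mul_nonneg ht.1 hD0.le, h1⟩ : t * D ∈ Set.Icc 0 (dist x m))
          ⟨mul_nonneg ht'.1 hD0.le, h2⟩ h
        exact mul_right_cancel₀ hD0.ne' this
      · exfalso
        have v1 := hval1 t ht.1 h1
        have v2 := hval2 t' ht'.2 (not_le.2 h2)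
        rw [h] at v1
        have tri : dist x y ≤ dist x (κ t') + dist (κ t') y := dist_triangle x (κ t') y
        rw [v1.1, v2.2] at tri
        have hDxy : dist x y = D := rfl
        rw [hDxy] at tri
        have hlt : t * D < t' * D := h1.trans_lt h2
        linarith
      · exfalso
        have v1 := hval1 t' ht'.1 h2
        have v2 := hval2 t ht.2 (not_le.2 h1)
        rw [← h] at v1
        have tri : dist x y ≤ dist x (κ t) + dist (κ t) y := dist_triangle x (κ t) y
        rw [v1.1, v2.2] at tri
        have hDxy : dist x y = D := rfl
        rw [hDxy] at tri
        have hlt : t' * D < t * D := h2.trans_lt h1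
        linarith
      · simp only [hκ] at h
        rw [if_neg (not_le.2 h1), if_neg (not_le.2 h2)] at h
        have m1 : t * D - a ∈ Set.Icc (0:ℝ) (dist m y) := by
          constructor
          · linarith
          · rw [← hb]; nlinarith [ht.2, ht.1]
        have m2 : t' * D - a ∈ Set.Icc (0:ℝ) (dist m y) := by
          constructor
          · linarith
          · rw [← hb]; nlinarith [ht'.2, ht'.1]
        have := geo_injOn hι2 m1 m2 h
        have : t * D = t' * D := by linarith
        exact mul_right_cancel₀ hD0.ne' this
  have hmκ : m ∈ κ '' Set.Icc (0:ℝ) 1 := by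
    refine ⟨a / D, ⟨div_nonneg ha0.le hD0.le, (div_le_one hD0).2 (by linarith)⟩, ?_⟩
    have hval : a / D * D = a := div_mul_cancel₀ a hD0.ne'
    have : κ (a / D) = ι1 (a / D * D) := if_pos (by rw [hval])
    rw [this, hval]
    exact hι1.2.2.1
  obtain ⟨A, _, huniq⟩ := hX.2 x y hxy
  have e1 := huniq _ harc
  have e2 := huniq _ (isGeo_isArc hxy hι)
  rw [← hD] at e2
  rw [e2, ← e1]
  exact hmκ

end Aux2

section Aux3
variable {X : Type*} [MetricSpace X]

lemma exists_median (hX : IsMetricTree X) (x y z : X) :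
    ∃ m : X, MBtw x m y ∧ MBtw x m z ∧ MBtw y m z := by
  classical
  rcases eq_or_ne y z with rfl | hyz
  · exact ⟨y, by simp [MBtw], by simp [MBtw], by simp [MBtw]⟩
  rcases eq_or_ne x y with rfl | hxy
  · exact ⟨x, by simp [MBtw], by simp [MBtw], by simp [MBtw]⟩
  rcases eq_or_ne x z with rfl | hxz
  · exact ⟨x, by simp [MBtw], by simp [MBtw], by simp [MBtw, dist_comm]⟩
  obtain ⟨γ1, hγ1, hl1⟩ := hX.1 x y
  obtain ⟨ι1, hι1, _⟩ := exists_geo_of_curve γ1 hγ1 hl1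
  obtain ⟨γ2, hγ2, hl2⟩ := hX.1 x z
  obtain ⟨ι2, hι2, _⟩ := exists_geo_of_curve γ2 hγ2 hl2
  set D1 := dist x y with hD1
  set D2 := dist x z with hD2
  set S : Set ℝ := Set.Icc 0 D1 ∩ ι1 ⁻¹' (ι2 '' Set.Icc 0 D2) with hS
  have hcpt : IsCompact (ι2 '' Set.Icc (0:ℝ) D2) := isCompact_Icc.image hι2.1.continuous
  have hScl : IsClosed S := isClosed_Icc.inter (hcpt.isClosed.preimage hι1.1.continuous)
  have h0S : (0:ℝ) ∈ S := by
    refine ⟨Set.left_mem_Icc.2 dist_nonneg, ⟨0, Set.left_mem_Icc.2 dist_nonneg, ?_⟩⟩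
    rw [hι2.2.1, hι1.2.1]
  have hbdd : BddAbove S := ⟨D1, fun u hu => hu.1.2⟩
  set β := sSup S with hβdef
  have hβ : β ∈ S := hScl.csSup_mem ⟨0, h0S⟩ hbdd
  have hdxm : dist x (ι1 β) = β := geo_dist_left hι1 hβ.1
  obtain ⟨hdIcc, hmeq, hm2⟩ := mem_geo_eq hι2 hβ.2
  rw [hdxm] at hmeq hdIcc
  have hm1 : MBtw x (ι1 β) y := geo_mbtw hι1 hβ.1
  refine ⟨ι1 β, hm1, hm2, ?_⟩
  rcases eq_or_ne (ι1 β) y with hmy | hmy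
  · rw [hmy]; simp [MBtw]
  rcases eq_or_ne (ι1 β) z with hmz | hmz
  · rw [hmz]; simp [MBtw]
  have hβD1 : β < D1 := by
    rcases lt_or_eq_of_le hβ.1.2 with h | h
    · exact h
    · exfalso; apply hmy; rw [h]; exact hι1.2.2.1
  have hβD2 : β < D2 := by
    rcases lt_or_eq_of_le hdIcc.2 with h | h
    · exact h
    · exfalso; apply hmz; rw [hmeq, h]; exact hι2.2.2.1
  set L1 := D1 - β with hL1
  set L2 := D2 - β with hL2
  set L := L1 + L2 with hL
  have hL1p : 0 < L1 := by simp [hL1]; linarith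
  have hL2p : 0 < L2 := by simp [hL2]; linarith
  have hLp : 0 < L := by linarith
  have hβ0 : 0 ≤ β := hβ.1.1
  set κ : ℝ → X := fun t => if t * L ≤ L1 then ι1 (D1 - t * L) else ι2 (β + (t * L - L1))
    with hκ
  have harg1 : ∀ t : ℝ, 0 ≤ t → t * L ≤ L1 → D1 - t * L ∈ Set.Icc (0:ℝ) D1 := by
    intro t ht h
    constructor
    · linarith
    · nlinarith
  have harg2 : ∀ t : ℝ, t ≤ 1 → ¬(t * L ≤ L1) → β + (t * L - L1) ∈ Set.Icc (0:ℝ) D2 := by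
    intro t ht h
    push_neg at h
    constructor
    · linarith
    · nlinarith
  have hκcont : Continuous κ := by
    refine Continuous.if_le ?_ ?_ (continuous_id.mul continuous_const) continuous_const ?_
    · exact hι1.1.continuous.comp (continuous_const.sub (continuous_id.mul continuous_const))
    · exact hι2.1.continuous.comp
        (continuous_const.add ((continuous_id.mul continuous_const).sub continuous_const))
    · intro t h
      rw [h]
      have e1 : D1 - L1 = β := by rw [hL1]; ring
      rw [e1, show β + (L1 - L1) = β by ring]
      exact hmeq
  have harc : IsArc (κ '' Set.Icc (0:ℝ) 1) y z := by
    refine ⟨κ, ⟨hκcont.continuousOn, ?_, ?_⟩, ?_, rfl⟩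
    · have : κ 0 = ι1 (D1 - 0 * L) := if_pos (by rw [zero_mul]; exact hL1p.le)
      rw [this, zero_mul, sub_zero, hι1.2.2.1]
    · have : κ 1 = ι2 (β + (1 * L - L1)) := if_neg (by rw [one_mul]; push_neg; linarith)
      rw [this, one_mul, show β + (L - L1) = D2 by rw [hL, hL2]; ring, hι2.2.2.1]
    · intro t ht t' ht' h
      rcases le_or_gt (t * L) L1 with h1 | h1 <;> rcases le_or_gt (t' * L) L1 with h2 | h2
      · simp only [hκ] at h
        rw [if_pos h1, if_pos h2] at h
        have := geo_injOn hι1 (harg1 t ht.1 h1) (harg1 t' ht'.1 h2) h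
        have : t * L = t' * L := by linarith
        exact mul_right_cancel₀ hLp.ne' this
      · exfalso
        simp only [hκ] at h
        rw [if_pos h1, if_neg (not_le.2 h2)] at h
        have hsmem : D1 - t * L ∈ S := by
          refine ⟨harg1 t ht.1 h1, ?_⟩
          exact ⟨β + (t' * L - L1), harg2 t' ht'.2 (not_le.2 h2), h.symm⟩
        have hsle : D1 - t * L ≤ β := le_csSup hbdd hsmem
        have hsge : β ≤ D1 - t * L := by linarith
        have hseq : D1 - t * L = β := le_antisymm hsle hsge
        rw [hseq] at h
        have : β + (t' * L - L1) = β := by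
          exact geo_injOn hι2 (harg2 t' ht'.2 (not_le.2 h2)) ⟨hβ0, hβD2.le⟩ (h.symm.trans hmeq)
        have : t' * L ≤ L1 := by linarith
        linarith
      · exfalso
        simp only [hκ] at h
        rw [if_neg (not_le.2 h1), if_pos h2] at h
        have hsmem : D1 - t' * L ∈ S := by
          refine ⟨harg1 t' ht'.1 h2, ?_⟩
          exact ⟨β + (t * L - L1), harg2 t ht.2 (not_le.2 h1), h⟩
        have hsle : D1 - t' * L ≤ β := le_csSup hbdd hsmem
        have hsge : β ≤ D1 - t' * L := by linarith
        have hseq : D1 - t' * L = β := le_antisymm hsle hsge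
        rw [hseq] at h
        have : β + (t * L - L1) = β := by
          exact geo_injOn hι2 (harg2 t ht.2 (not_le.2 h1)) ⟨hβ0, hβD2.le⟩ (h.trans hmeq)
        have : t * L ≤ L1 := by linarith
        linarith
      · simp only [hκ] at h
        rw [if_neg (not_le.2 h1), if_neg (not_le.2 h2)] at h
        have := geo_injOn hι2 (harg2 t ht.2 (not_le.2 h1)) (harg2 t' ht'.2 (not_le.2 h2)) h
        have : t * L = t' * L := by linarith
        exact mul_right_cancel₀ hLp.ne' this
  have hmκ : ι1 β ∈ κ '' Set.Icc (0:ℝ) 1 := by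
    refine ⟨L1 / L, ⟨div_nonneg hL1p.le hLp.le, (div_le_one hLp).2 (by linarith)⟩, ?_⟩
    have hval : L1 / L * L = L1 := div_mul_cancel₀ L1 hLp.ne'
    have : κ (L1 / L) = ι1 (D1 - L1 / L * L) := if_pos (by rw [hval])
    rw [this, hval, show D1 - L1 = β by rw [hL1]; ring]
  obtain ⟨γ3, hγ3, hl3⟩ := hX.1 y z
  obtain ⟨ι3, hι3, _⟩ := exists_geo_of_curve γ3 hγ3 hl3
  obtain ⟨A, _, huniq⟩ := hX.2 y z hyz
  have e1 := huniq _ harc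
  have e2 := huniq _ (isGeo_isArc hyz hι3)
  have : ι1 β ∈ ι3 '' Set.Icc (0:ℝ) (dist y z) := by rw [e2, ← e1]; exact hmκ
  exact (mem_geo_eq hι3 this).2.2

end Aux3

section Aux4
variable {X : Type*} [MetricSpace X]

lemma evar_comp_val {T : Set X} (γ : ℝ → ↥T) (s : Set ℝ) :
    eVariationOn (fun t => (γ t : X)) s = eVariationOn γ s := rfl

lemma subtree_convex (hX : IsMetricTree X) {T : Set X} (hTt : IsMetricTree ↥T)
    {p q m : X} (hp : p ∈ T) (hq : q ∈ T) (hm : MBtw p m q) : m ∈ T := by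
  rcases eq_or_ne p q with rfl | hpq
  · have hd : dist p m = 0 := by
      unfold MBtw at hm
      rw [dist_comm m p, dist_self] at hm
      linarith [dist_nonneg (x := p) (y := m), dist_nonneg (x := m) (y := p)]
    rw [← dist_eq_zero.1 hd]; exact hp
  obtain ⟨γT, hγT, hlT⟩ := hTt.1 ⟨p, hp⟩ ⟨q, hq⟩
  have hγ : IsCurveOn (fun s => (γT s : X)) p q := by
    refine ⟨continuous_subtype_val.comp_continuousOn hγT.1, ?_, ?_⟩
    · exact congrArg Subtype.val hγT.2.1
    · exact congrArg Subtype.val hγT.2.2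
  have hlen : eVariationOn (fun s => (γT s : X)) (Set.Icc 0 1) = edist p q := by
    rw [evar_comp_val, hlT]; rfl
  obtain ⟨ι, hι, himg⟩ := exists_geo_of_curve _ hγ hlen
  have hmem : m ∈ ι '' Set.Icc (0:ℝ) (dist p q) := mbtw_mem_geo hX hι hm
  obtain ⟨c, _, rfl⟩ := hmem
  obtain ⟨s, _, heq⟩ := himg c
  rw [← heq]
  exact (γT s).2

lemma exists_gate (hX : IsMetricTree X) {T : Set X} (hTc : IsClosed T) (hTne : T.Nonempty)
    (hTt : IsMetricTree ↥T) (x : X) :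
    ∃ p, p ∈ T ∧ ∀ t ∈ T, MBtw x p t := by
  obtain ⟨t0, ht0⟩ := hTne
  obtain ⟨γ, hγ, hl⟩ := hX.1 x t0
  obtain ⟨ι, hι, _⟩ := exists_geo_of_curve γ hγ hl
  set D := dist x t0 with hD
  set S := Set.Icc 0 D ∩ ι ⁻¹' T with hS
  have hScl : IsClosed S := isClosed_Icc.inter (hTc.preimage hι.1.continuous)
  have hDS : D ∈ S := by
    refine ⟨Set.right_mem_Icc.2 dist_nonneg, ?_⟩
    show ι D ∈ T
    rw [show ι D = t0 from hι.2.2.1]; exact ht0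
  have hbdd : BddBelow S := ⟨0, fun u hu => hu.1.1⟩
  set a := sInf S with ha
  have haS : a ∈ S := hScl.csInf_mem ⟨D, hDS⟩ hbdd
  refine ⟨ι a, haS.2, ?_⟩
  intro t ht
  obtain ⟨m, hm1, hm2, hm3⟩ := exists_median hX x t t0
  have hmT : m ∈ T := subtree_convex hX hTt ht ht0 hm3
  have hmem := mbtw_mem_geo hX hι hm2
  obtain ⟨c, hcIcc, hceq⟩ := hmem
  have hcS : c ∈ S := by
    refine ⟨hcIcc, ?_⟩
    show ι c ∈ T
    rw [hceq]; exact hmT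
  have hle : a ≤ c := csInf_le hbdd hcS
  have h1 : MBtw x (ι a) m := by
    unfold MBtw
    rw [← hceq, geo_dist_left hι haS.1, hι.2.2.2 a haS.1 c hcIcc,
      geo_dist_left hι hcIcc, abs_of_nonpos (by linarith)]
    ring
  exact mbtw_trans hm1 h1

end Aux4


/-- If `X` is a metric tree and `T ⊆ X` is a closed non-empty subset that is itself a
metric tree, then there is a 1-Lipschitz retraction `r : X → T` with
`d(x, r(x)) = dist(x, T)` for all `x`. -/
theorem exists_lipschitz_retraction_onto_subtree {X : Type*} [MetricSpace X]
    (hX : IsMetricTree X) (T : Set X) (hTc : IsClosed T) (hTne : T.Nonempty)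
    (hTt : IsMetricTree ↥T) :
    ∃ r : X → X, (∀ x, r x ∈ T) ∧ (∀ t ∈ T, r t = t) ∧ LipschitzWith 1 r ∧
      ∀ x, dist x (r x) = Metric.infDist x T := by
  have hgate := fun x => exists_gate hX hTc hTne hTt x
  choose r hrT hrB using hgate
  refine ⟨r, hrT, ?_, ?_, ?_⟩
  · intro t ht
    have h := hrB t t ht
    unfold MBtw at h
    rw [dist_self] at h
    have h0 : dist t (r t) = 0 := by
      have := dist_nonneg (x := t) (y := r t)
      have := dist_nonneg (x := r t) (y := t)
      linarith
    exact (dist_eq_zero.1 h0).symm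
  · apply LipschitzWith.of_dist_le_mul
    intro x y
    rw [NNReal.coe_one, one_mul]
    have e1 := hrB x (r y) (hrT y)
    have e2 := hrB y (r x) (hrT x)
    unfold MBtw at e1 e2
    have tri1 := dist_triangle x y (r y)
    have tri2 := dist_triangle y x (r x)
    have c1 := dist_comm (r y) (r x)
    have c2 := dist_comm y x
    have c3 := dist_comm (r x) (r y)
    linarith
  · intro x
    refine le_antisymm ?_ (infDist_le_dist_of_mem (hrT x))
    by_contra hcon
    push_neg at hcon
    obtain ⟨t, htT, hlt⟩ := (infDist_lt_iff hTne).1 hcon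
    have h := hrB x t htT
    unfold MBtw at h
    have := dist_nonneg (x := r x) (y := t)
    linarith
end
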